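/- arXiv:2103.05907 — 3 statements merged into one kernel-verified Lean document; each statement's English description precedes it below -/
import Mathlib

section
/- Let K ⊂ ℝⁿ be a centrally symmetric compact convex set with nonempty interior that is α-strongly convex with respect to ‖·‖_K. Then for all u, v ∈ ℝⁿ at which ½‖·‖²_{K°} is differentiable, the Bregman divergence satisfies D_{½‖·‖²_{K°}}(u,v) ≤ 4·((α+1)/α)·‖u − v‖²_{K°}. -/
open scoped InnerProductSpace
open scoped Pointwise
open MeasureTheory

noncomputable section

abbrev Euc (n : ℕ) := EuclideanSpace ℝ (Fin n)

/-- The polar set `K° = {d | ⟪d, x⟫ ≤ 1 for all x ∈ K}`. -/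
def polarSet {n : ℕ} (K : Set (Euc n)) : Set (Euc n) := {d | ∀ x ∈ K, ⟪d, x⟫_ℝ ≤ 1}

/-- The normal cone of `K` at `y`. -/
def normalCone {n : ℕ} (K : Set (Euc n)) (y : Euc n) : Set (Euc n) :=
  {d | ∀ x ∈ K, 0 ≤ ⟪d, y - x⟫_ℝ}

/-- A set is smooth if at each boundary point there is exactly one normal direction in `∂K°`. -/
def SmoothSet {n : ℕ} (K : Set (Euc n)) : Prop :=
  ∀ x ∈ frontier K, ∃! d, d ∈ normalCone K x ∩ frontier (polarSet K)

/-- A set is strictly convex if the midpoint of two distinct boundary points is interior. -/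
def StrictlyConvexSet {n : ℕ} (K : Set (Euc n)) : Prop :=
  ∀ x₁ ∈ frontier K, ∀ x₂ ∈ frontier K, x₁ ≠ x₂ → midpoint ℝ x₁ x₂ ∈ interior K

/-- `(α, q)`-uniform convexity of a set w.r.t. its gauge. -/
def UniformlyConvexSet {n : ℕ} (K : Set (Euc n)) (α q : ℝ) : Prop :=
  ∀ x ∈ K, ∀ y ∈ K, ∀ z ∈ K, ∀ γ ∈ Set.Icc (0:ℝ) 1,
    γ • x + (1 - γ) • y + (α / q * (γ * (1 - γ)) * gauge K (x - y) ^ q) • z ∈ K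

/-- The barrier function `F_K(x) = -ln(1 - ‖x‖_K) - ‖x‖_K`. -/
def FK {n : ℕ} (K : Set (Euc n)) (x : Euc n) : ℝ := -Real.log (1 - gauge K x) - gauge K x

/-- Fenchel conjugate of the barrier `F_K` (defined on `D_K = {‖x‖_K < 1}`). -/
def FstarK {n : ℕ} (K : Set (Euc n)) (d : Euc n) : ℝ :=
  sSup ((fun x => ⟪x, d⟫_ℝ - FK K x) '' {x | gauge K x < 1})

/-- Bregman divergence `D_F(u, v) = F(u) - F(v) - ⟪∇F(v), u - v⟫`. -/
def breg {n : ℕ} (F : Euc n → ℝ) (u v : Euc n) : ℝ :=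
  F u - F v - ⟪gradient F v, u - v⟫_ℝ

def l1Ball {n : ℕ} (r : ℝ) : Set (Euc n) := {x | ∑ i, |x i| ≤ r}
def linfBall {n : ℕ} (R : ℝ) : Set (Euc n) := {x | ∀ i, |x i| ≤ R}
def l2Ball {n : ℕ} (r : ℝ) : Set (Euc n) := Metric.closedBall 0 r
def lqBall {n : ℕ} (q r : ℝ) : Set (Euc n) := {x | ∑ i, |x i| ^ q ≤ r ^ q}

open Topology

section Aux

variable {n : ℕ} {K : Set (Euc n)}

lemma polar_convex : Convex ℝ (polarSet K) := by
  intro d hd e he a b ha hb hab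
  intro x hx
  have h1 := hd x hx
  have h2 := he x hx
  rw [inner_add_left, real_inner_smul_left, real_inner_smul_left]
  nlinarith

lemma polar_isClosed : IsClosed (polarSet K) := by
  have : polarSet K = ⋂ x ∈ K, {d : Euc n | ⟪d, x⟫_ℝ ≤ 1} := by
    ext d; simp [polarSet]
  rw [this]
  exact isClosed_biInter fun x _ =>
    isClosed_le (Continuous.inner continuous_id continuous_const) continuous_const

lemma polar_symm (hKsymm : ∀ x ∈ K, -x ∈ K) : ∀ d ∈ polarSet K, -d ∈ polarSet K := by
  intro d hd x hx
  have := hd (-x) (hKsymm x hx)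
  rwa [inner_neg_left, ← inner_neg_right]

lemma polar_mem_nhds (hKcomp : IsCompact K) : polarSet K ∈ 𝓝 (0 : Euc n) := by
  obtain ⟨R, hR⟩ := (Metric.isBounded_iff_subset_closedBall 0).mp hKcomp.isBounded
  have hR' : K ⊆ Metric.closedBall 0 (max R 1) :=
    hR.trans (Metric.closedBall_subset_closedBall (le_max_left _ _))
  have hRpos : (0:ℝ) < max R 1 := lt_of_lt_of_le one_pos (le_max_right _ _)
  have hsub : Metric.closedBall (0 : Euc n) (max R 1)⁻¹ ⊆ polarSet K := by
    intro d hd x hx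
    have h1 : ‖d‖ ≤ (max R 1)⁻¹ := by simpa using hd
    have h2 : ‖x‖ ≤ max R 1 := by simpa using hR' hx
    calc ⟪d, x⟫_ℝ ≤ ‖d‖ * ‖x‖ := real_inner_le_norm d x
      _ ≤ (max R 1)⁻¹ * max R 1 := by
          apply mul_le_mul h1 h2 (norm_nonneg _) (by positivity)
      _ = 1 := inv_mul_cancel₀ hRpos.ne'
  exact Filter.mem_of_superset (Metric.closedBall_mem_nhds 0 (by positivity)) hsub

lemma inner_le_gaugePolar (habsP : Absorbent ℝ (polarSet K)) (d : Euc n) {x : Euc n}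
    (hx : x ∈ K) : ⟪d, x⟫_ℝ ≤ gauge (polarSet K) d := by
  by_contra hlt
  push_neg at hlt
  obtain ⟨r, hr0, hrlt, hmem⟩ := exists_lt_of_gauge_lt habsP hlt
  obtain ⟨p, hp, rfl⟩ := hmem
  have h1 : ⟪p, x⟫_ℝ ≤ 1 := hp x hx
  rw [real_inner_smul_left] at hrlt
  nlinarith

lemma inner_le_gauge_mul (habsP : Absorbent ℝ (polarSet K)) (habsK : Absorbent ℝ K)
    (d w : Euc n) : ⟪d, w⟫_ℝ ≤ gauge (polarSet K) d * gauge K w := by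
  have key : ∀ c : ℝ, gauge K w < c → ⟪d, w⟫_ℝ ≤ c * gauge (polarSet K) d := by
    intro c hc
    obtain ⟨r, hr0, hrlt, hmem⟩ := exists_lt_of_gauge_lt habsK hc
    obtain ⟨k, hk, rfl⟩ := hmem
    rw [real_inner_smul_right]
    have h1 : ⟪d, k⟫_ℝ ≤ gauge (polarSet K) d := inner_le_gaugePolar habsP d hk
    nlinarith [gauge_nonneg (s := polarSet K) d]
  by_contra hlt
  push_neg at hlt
  set a := gauge (polarSet K) d with ha
  set c := gauge K w with hcw
  have hanon : 0 ≤ a := gauge_nonneg _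
  rcases eq_or_lt_of_le hanon with h0 | h0
  · have := key (c + 1) (by linarith)
    rw [← h0] at this hlt
    nlinarith
  · have hclt : c < ⟪d, w⟫_ℝ / a := by
      rw [lt_div_iff₀ h0]; linarith [mul_comm c a]
    have := key ((c + ⟪d, w⟫_ℝ / a) / 2) (by linarith)
    have h2 : (c + ⟪d, w⟫_ℝ / a) / 2 < ⟪d, w⟫_ℝ / a := by linarith
    have h3 : (c + ⟪d, w⟫_ℝ / a) / 2 * a < ⟪d, w⟫_ℝ / a * a :=
      mul_lt_mul_of_pos_right h2 h0
    rw [div_mul_cancel₀ _ h0.ne'] at h3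
    linarith

lemma mem_of_forall_inner_polar (hKconv : Convex ℝ K) (hKcl : IsClosed K)
    (h0K : (0:Euc n) ∈ K) {x : Euc n}
    (hx : ∀ d ∈ polarSet K, ⟪d, x⟫_ℝ ≤ 1) : x ∈ K := by
  by_contra hxK
  obtain ⟨f, s, hfa, hfx⟩ := geometric_hahn_banach_closed_point hKconv hKcl hxK
  have hs0 : 0 < s := by have := hfa 0 h0K; simpa using this
  set e := (InnerProductSpace.toDual ℝ (Euc n)).symm f with he
  have hee : ∀ y : Euc n, ⟪e, y⟫_ℝ = f y := fun y => InnerProductSpace.toDual_symm_apply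
  have hd : s⁻¹ • e ∈ polarSet K := by
    intro y hy
    rw [real_inner_smul_left, hee]
    have := (hfa y hy).le
    calc s⁻¹ * f y ≤ s⁻¹ * s := by
          apply mul_le_mul_of_nonneg_left this (by positivity)
      _ = 1 := inv_mul_cancel₀ hs0.ne'
  have h2 := hx _ hd
  rw [real_inner_smul_left, hee] at h2
  have h3 : s⁻¹ * f x > s⁻¹ * s := by
    apply mul_lt_mul_of_pos_left hfx (by positivity)
  rw [inv_mul_cancel₀ hs0.ne'] at h3
  linarith

lemma convexOn_gaugeSq {s : Set (Euc n)} (hs : Convex ℝ s) (habs : Absorbent ℝ s) :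
    ConvexOn ℝ Set.univ (fun d => gauge s d ^ 2 / 2) := by
  refine ⟨convex_univ, fun x _ y _ a b ha hb hab => ?_⟩
  simp only [smul_eq_mul]
  have h1 : gauge s (a • x + b • y) ≤ a * gauge s x + b * gauge s y := by
    calc gauge s (a • x + b • y) ≤ gauge s (a • x) + gauge s (b • y) :=
          gauge_add_le hs habs _ _
      _ = a * gauge s x + b * gauge s y := by
          rw [gauge_smul_of_nonneg ha, gauge_smul_of_nonneg hb, smul_eq_mul, smul_eq_mul]
  have h0 : 0 ≤ gauge s (a • x + b • y) := gauge_nonneg _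
  have hx0 : 0 ≤ gauge s x := gauge_nonneg _
  have hy0 : 0 ≤ gauge s y := gauge_nonneg _
  have hsq : gauge s (a • x + b • y) ^ 2 ≤ (a * gauge s x + b * gauge s y) ^ 2 :=
    pow_le_pow_left₀ h0 h1 2
  nlinarith [mul_nonneg (mul_nonneg ha hb) (sq_nonneg (gauge s x - gauge s y))]

lemma subgrad {F : Euc n → ℝ} (hF : ConvexOn ℝ Set.univ F) {u : Euc n}
    (hu : DifferentiableAt ℝ F u) (w : Euc n) :
    F u + ⟪gradient F u, w - u⟫_ℝ ≤ F w := by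
  have hF' : HasFDerivAt F (InnerProductSpace.toDual ℝ (Euc n) (gradient F u)) u :=
    hu.hasGradientAt.hasFDerivAt
  have hc : HasDerivAt (fun t : ℝ => u + t • (w - u)) (w - u) 0 := by
    simpa using ((hasDerivAt_id (0:ℝ)).smul_const (w - u)).const_add u
  have hφ : HasDerivAt (fun t : ℝ => F (u + t • (w - u))) ⟪gradient F u, w - u⟫_ℝ 0 := by
    have hF'' : HasFDerivAt F (InnerProductSpace.toDual ℝ (Euc n) (gradient F u))
        ((fun t : ℝ => u + t • (w - u)) 0) := by simpa using hF'
    have := hF''.comp_hasDerivAt 0 hc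
    simpa [InnerProductSpace.toDual_apply_apply, Function.comp_def] using this
  have haff : ConvexOn ℝ Set.univ (fun t : ℝ => F (u + t • (w - u))) := by
    have h2 := hF.comp_affineMap (AffineMap.lineMap u w : ℝ →ᵃ[ℝ] Euc n)
    simp only [Set.preimage_univ] at h2
    have heq : (fun t : ℝ => F (u + t • (w - u))) = F ∘ ⇑(AffineMap.lineMap u w) := by
      funext t
      simp [AffineMap.lineMap_apply, add_comm]
    rw [heq]
    exact h2
  have hslope := haff.le_slope_of_hasDerivAt (Set.mem_univ (0:ℝ)) (Set.mem_univ 1) one_pos hφ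
  rw [slope_def_field] at hslope
  simp only [one_smul, zero_smul, add_zero, add_sub_cancel] at hslope
  have : (F w - F u) / (1 - 0) = F w - F u := by norm_num
  rw [this] at hslope
  linarith


lemma zero_mem_interior (hKconv : Convex ℝ K) (hKsymm : ∀ x ∈ K, -x ∈ K)
    (hKint : (interior K).Nonempty) : (0 : Euc n) ∈ interior K := by
  obtain ⟨w, hw⟩ := hKint
  have hKeq : -K = K := by
    ext z
    constructor
    · intro hz; rw [Set.mem_neg] at hz; simpa using hKsymm _ hz
    · intro hz; rw [Set.mem_neg]; exact hKsymm _ hz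
  have hw' : -w ∈ interior K := by
    have hopen : IsOpen (-interior K) := isOpen_interior.neg
    have hsub : -interior K ⊆ K := by
      intro z hz
      rw [Set.mem_neg] at hz
      have : -z ∈ K := interior_subset hz
      simpa using hKsymm _ this
    exact interior_maximal hsub hopen (Set.neg_mem_neg.mpr hw)
  have h := hKconv.interior hw hw' (by norm_num : (0:ℝ) ≤ 1/2)
    (by norm_num : (0:ℝ) ≤ 1/2) (by norm_num)
  have heq : (1/2 : ℝ) • w + (1/2 : ℝ) • (-w) = 0 := by
    rw [smul_neg, add_neg_cancel]
  rwa [heq] at h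

lemma grad_repr (hKcomp : IsCompact K) (hKconv : Convex ℝ K)
    (hKsymm : ∀ x ∈ K, -x ∈ K) (hKint : (interior K).Nonempty)
    (u : Euc n)
    (hu : DifferentiableAt ℝ (fun d => gauge (polarSet K) d ^ 2 / 2) u) :
    ∃ x ∈ K, gradient (fun d => gauge (polarSet K) d ^ 2 / 2) u = gauge (polarSet K) u • x ∧
      ⟪u, x⟫_ℝ = gauge (polarSet K) u := by
  have h0K : (0 : Euc n) ∈ interior K := zero_mem_interior hKconv hKsymm hKint
  have habsP : Absorbent ℝ (polarSet K) := absorbent_nhds_zero (polar_mem_nhds hKcomp)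
  have hPconv : Convex ℝ (polarSet K) := polar_convex
  have hFconv : ConvexOn ℝ Set.univ (fun d => gauge (polarSet K) d ^ 2 / 2) :=
    convexOn_gaugeSq hPconv habsP
  set F := fun d : Euc n => gauge (polarSet K) d ^ 2 / 2 with hFdef
  set g := gradient F u with hgdef
  set a := gauge (polarSet K) u with hadef
  have hanon : 0 ≤ a := gauge_nonneg _
  have hFu : F u = a ^ 2 / 2 := rfl
  have G : ∀ e : Euc n, ⟪g, e⟫_ℝ ≤ a * gauge (polarSet K) e := by
    intro e
    set he := gauge (polarSet K) e with hhedef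
    have hen : 0 ≤ he := gauge_nonneg _
    have key : ∀ t : ℝ, 0 < t → ⟪g, e⟫_ℝ ≤ a * he + t * he ^ 2 / 2 := by
      intro t ht
      have hsub := subgrad hFconv hu (u + t • e)
      have hlin : ⟪g, u + t • e - u⟫_ℝ = t * ⟪g, e⟫_ℝ := by
        rw [add_sub_cancel_left, real_inner_smul_right]
      have hgauge : gauge (polarSet K) (u + t • e) ≤ a + t * he := by
        calc gauge (polarSet K) (u + t • e)
            ≤ gauge (polarSet K) u + gauge (polarSet K) (t • e) :=
              gauge_add_le hPconv habsP _ _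
          _ = a + t * he := by rw [gauge_smul_of_nonneg ht.le, smul_eq_mul]
      have hsq := pow_le_pow_left₀ (gauge_nonneg (s := polarSet K) (u + t • e)) hgauge 2
      have hFle : F (u + t • e) ≤ (a + t * he) ^ 2 / 2 := by
        simp only [hFdef]; linarith
      rw [hlin] at hsub
      have h6 : t * ⟪g, e⟫_ℝ ≤ t * (a * he + t * he ^ 2 / 2) := by nlinarith
      exact le_of_mul_le_mul_left h6 ht
    refine le_of_forall_pos_le_add ?_
    intro ε hε
    have hk := key (2 * ε / (he ^ 2 + 1)) (by positivity)
    have h9 : 2 * ε / (he ^ 2 + 1) * (he ^ 2 + 1) ≤ 2 * ε := by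
      rw [div_mul_cancel₀ _ (by positivity : (he:ℝ) ^ 2 + 1 ≠ 0)]
    have ht0 : 0 < 2 * ε / (he ^ 2 + 1) := by positivity
    nlinarith
  have hEuler : ⟪g, u⟫_ℝ = a ^ 2 := by
    have hle : ⟪g, u⟫_ℝ ≤ a ^ 2 := by
      have := G u
      rw [← hadef] at this
      nlinarith
    have hge : a ^ 2 ≤ ⟪g, u⟫_ℝ := by
      refine le_of_forall_pos_le_add ?_
      intro ε hε
      set t := min 1 (2 * ε / (a ^ 2 + 1)) with htdef
      have ht0 : 0 < t := lt_min one_pos (by positivity)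
      have ht1 : t ≤ 1 := min_le_left _ _
      have hsub := subgrad hFconv hu ((1 - t) • u)
      have hlin : ⟪g, (1 - t) • u - u⟫_ℝ = -(t * ⟪g, u⟫_ℝ) := by
        have h7 : (1 - t) • u - u = (-t) • u := by
          rw [sub_smul, one_smul, neg_smul]; abel
        rw [h7, real_inner_smul_right]; ring
      have hgauge : gauge (polarSet K) ((1 - t) • u) = (1 - t) * a := by
        rw [gauge_smul_of_nonneg (by linarith : (0:ℝ) ≤ 1 - t), smul_eq_mul]
      have hFval : F ((1 - t) • u) = ((1 - t) * a) ^ 2 / 2 := by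
        simp only [hFdef, hgauge]
      rw [hlin, hFval, hFu] at hsub
      have h6 : t * (a ^ 2 - t * a ^ 2 / 2) ≤ t * ⟪g, u⟫_ℝ := by nlinarith
      have h7 : a ^ 2 - t * a ^ 2 / 2 ≤ ⟪g, u⟫_ℝ := le_of_mul_le_mul_left h6 ht0
      have h9 : t * (a ^ 2 + 1) ≤ 2 * ε / (a ^ 2 + 1) * (a ^ 2 + 1) :=
        mul_le_mul_of_nonneg_right (min_le_right _ _) (by positivity)
      rw [div_mul_cancel₀ _ (by positivity : (a:ℝ) ^ 2 + 1 ≠ 0)] at h9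
      nlinarith
    linarith
  rcases eq_or_lt_of_le hanon with h0 | h0
  · refine ⟨0, interior_subset h0K, ?_, ?_⟩
    · have hg0 : g = 0 := by
        have h1 := G g
        rw [← h0, zero_mul] at h1
        have h2 : ⟪g, g⟫_ℝ = ‖g‖ ^ 2 := real_inner_self_eq_norm_sq g
        have h3 : ‖g‖ = 0 := by nlinarith [norm_nonneg g]
        exact norm_eq_zero.mp h3
      rw [hg0, smul_zero]
    · rw [inner_zero_right, ← h0]
  · refine ⟨a⁻¹ • g, ?_, ?_, ?_⟩
    · apply mem_of_forall_inner_polar hKconv hKcomp.isClosed (interior_subset h0K)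
      intro d hd
      have h1 : ⟪g, d⟫_ℝ ≤ a * gauge (polarSet K) d := G d
      have h2 : gauge (polarSet K) d ≤ 1 := gauge_le_one_of_mem hd
      rw [real_inner_smul_right, real_inner_comm]
      calc a⁻¹ * ⟪g, d⟫_ℝ ≤ a⁻¹ * (a * gauge (polarSet K) d) :=
            mul_le_mul_of_nonneg_left h1 (by positivity)
        _ = gauge (polarSet K) d := by field_simp
        _ ≤ 1 := h2
    · rw [smul_inv_smul₀ h0.ne']
    · rw [real_inner_smul_right, real_inner_comm, hEuler]
      field_simp

lemma claim1_aux (a b t s uy vx α : ℝ) (hbnon : 0 ≤ b)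
    (hint : 0 ≤ α * b * s ^ 2)
    (h1 : 1 / 2 * a + (1 - 1 / 2) * uy + α / 2 * (1 / 2 * (1 - 1 / 2)) * s ^ 2 * a ≤ a)
    (h2 : 1 / 2 * vx + (1 - 1 / 2) * b + α / 2 * (1 / 2 * (1 - 1 / 2)) * s ^ 2 * b ≤ b)
    (hB : a - uy - (vx - b) ≤ t * s) :
    α * (a * s) * s ≤ 4 * t * s := by
  linarith


end Aux

set_option maxHeartbeats 1000000 in
/-- Upper bound on the Bregman divergence of `½‖·‖²_{K°}` for an
`α`-strongly convex set `K` (i.e. `(α,2)`-uniformly convex). -/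
theorem bregman_upper_bound_stronglyConvex {n : ℕ}
    (K : Set (Euc n)) (hKcomp : IsCompact K) (hKconv : Convex ℝ K)
    (hKsymm : ∀ x ∈ K, -x ∈ K) (hKint : (interior K).Nonempty)
    (α : ℝ) (hα : 0 < α)
    (hsc : UniformlyConvexSet K α 2)
    (u v : Euc n)
    (hu : DifferentiableAt ℝ (fun d => gauge (polarSet K) d ^ 2 / 2) u)
    (hv : DifferentiableAt ℝ (fun d => gauge (polarSet K) d ^ 2 / 2) v) :
    breg (fun d => gauge (polarSet K) d ^ 2 / 2) u v
      ≤ 4 * ((α + 1) / α) * gauge (polarSet K) (u - v) ^ 2 := by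
  have h0K : (0 : Euc n) ∈ interior K := zero_mem_interior hKconv hKsymm hKint
  have habsK : Absorbent ℝ K := absorbent_nhds_zero (mem_interior_iff_mem_nhds.mp h0K)
  have habsP : Absorbent ℝ (polarSet K) := absorbent_nhds_zero (polar_mem_nhds hKcomp)
  have hPconv : Convex ℝ (polarSet K) := polar_convex
  have hFconv : ConvexOn ℝ Set.univ (fun d => gauge (polarSet K) d ^ 2 / 2) :=
    convexOn_gaugeSq hPconv habsP
  obtain ⟨x, hx, hgx, hux⟩ := grad_repr hKcomp hKconv hKsymm hKint u hu
  obtain ⟨y, hy, hgy, hvy⟩ := grad_repr hKcomp hKconv hKsymm hKint v hv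
  set a := gauge (polarSet K) u with hadef
  set b := gauge (polarSet K) v with hbdef
  set t := gauge (polarSet K) (u - v) with htdef
  set s := gauge K (x - y) with hsdef
  have hanon : 0 ≤ a := gauge_nonneg _
  have hbnon : 0 ≤ b := gauge_nonneg _
  have htnon : 0 ≤ t := gauge_nonneg _
  have hsnon : 0 ≤ s := gauge_nonneg _
  clear_value a b t s
  -- strong convexity inequalities
  have hm1 := hsc x hx y hy x hx (1/2) ⟨by norm_num, by norm_num⟩
  have hm2 := hsc x hx y hy y hy (1/2) ⟨by norm_num, by norm_num⟩
  have h1 := inner_le_gaugePolar habsP u hm1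
  have h2 := inner_le_gaugePolar habsP v hm2
  rw [← hadef, ← hsdef] at h1
  rw [← hbdef, ← hsdef] at h2
  simp only [inner_add_right, real_inner_smul_right, Real.rpow_two] at h1 h2
  rw [hux] at h1
  rw [hvy] at h2
  have hB0 := inner_le_gauge_mul habsP habsK (u - v) (x - y)
  rw [← htdef, ← hsdef] at hB0
  have hB : ⟪u, x⟫_ℝ - ⟪u, y⟫_ℝ - (⟪v, x⟫_ℝ - ⟪v, y⟫_ℝ) ≤ t * s := by
    have h3 : ⟪u - v, x - y⟫_ℝ = ⟪u, x⟫_ℝ - ⟪u, y⟫_ℝ - (⟪v, x⟫_ℝ - ⟪v, y⟫_ℝ) := by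
      rw [inner_sub_left, inner_sub_right, inner_sub_right]
    rwa [h3] at hB0
  rw [hux, hvy] at hB
  -- claim1 : α * (a * s) ≤ 4 * t
  have claim1 : α * (a * s) ≤ 4 * t := by
    rcases eq_or_lt_of_le hsnon with hs0 | hs0
    · rw [← hs0, mul_zero, mul_zero]
      linarith
    · have hint : (0:ℝ) ≤ α * b * s ^ 2 := by positivity
      have h5 : α * (a * s) * s ≤ 4 * t * s :=
        claim1_aux a b t s ⟪u, y⟫_ℝ ⟪v, x⟫_ℝ α hbnon hint h1 h2 hB
      exact le_of_mul_le_mul_right h5 hs0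
  -- claim2 : (a - b) * ⟪y, u - v⟫ ≤ t * t
  have hy1 : ⟪u - v, y⟫_ℝ ≤ t := by
    have := inner_le_gaugePolar habsP (u - v) hy
    rwa [← htdef] at this
  have hy2 : -⟪u - v, y⟫_ℝ ≤ t := by
    have := inner_le_gaugePolar habsP (u - v) (hKsymm y hy)
    rwa [inner_neg_right, ← htdef] at this
  have habs1 : |⟪u - v, y⟫_ℝ| ≤ t := abs_le.mpr ⟨by linarith, hy1⟩
  have htri1 : a ≤ b + t := by
    have h6 := gauge_add_le hPconv habsP v (u - v)
    have h7 : v + (u - v) = u := by abel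
    rw [h7, ← hadef, ← hbdef, ← htdef] at h6
    exact h6
  have htri2 : b ≤ a + t := by
    have h6 := gauge_add_le hPconv habsP u (v - u)
    have h7 : u + (v - u) = v := by abel
    have h8 : gauge (polarSet K) (v - u) = t := by
      rw [htdef, ← neg_sub u v, gauge_neg (polar_symm hKsymm)]
    rw [h7, ← hadef, ← hbdef, h8] at h6
    exact h6
  have habs2 : |a - b| ≤ t := abs_le.mpr ⟨by linarith, by linarith⟩
  have claim2 : (a - b) * ⟪y, u - v⟫_ℝ ≤ t * t := by
    calc (a - b) * ⟪y, u - v⟫_ℝ ≤ |(a - b) * ⟪y, u - v⟫_ℝ| := le_abs_self _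
      _ = |a - b| * |⟪y, u - v⟫_ℝ| := abs_mul _ _
      _ ≤ t * t := by
          rw [real_inner_comm (u - v) y]
          exact mul_le_mul habs2 habs1 (abs_nonneg _) htnon
  -- claim3 : a * ⟪x - y, u - v⟫ ≤ (a * s) * t
  have claim3 : a * ⟪x - y, u - v⟫_ℝ ≤ a * s * t := by
    have h6 : ⟪x - y, u - v⟫_ℝ ≤ t * s := by
      rw [real_inner_comm]; exact hB0
    calc a * ⟪x - y, u - v⟫_ℝ ≤ a * (t * s) := mul_le_mul_of_nonneg_left h6 hanon
      _ = a * s * t := by ring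
  -- breg bound
  have hsub := subgrad hFconv hu v
  have hvu : v - u = -(u - v) := by abel
  rw [hvu, inner_neg_right] at hsub
  have hbreg : breg (fun d => gauge (polarSet K) d ^ 2 / 2) u v
      ≤ a * ⟪x - y, u - v⟫_ℝ + (a - b) * ⟪y, u - v⟫_ℝ := by
    have hdef : breg (fun d => gauge (polarSet K) d ^ 2 / 2) u v
        = (fun d => gauge (polarSet K) d ^ 2 / 2) u
          - (fun d => gauge (polarSet K) d ^ 2 / 2) v
          - ⟪gradient (fun d => gauge (polarSet K) d ^ 2 / 2) v, u - v⟫_ℝ := rfl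
    rw [hdef, hgy]
    have hdecomp : ⟪gradient (fun d => gauge (polarSet K) d ^ 2 / 2) u, u - v⟫_ℝ
        - ⟪b • y, u - v⟫_ℝ
        = a * ⟪x - y, u - v⟫_ℝ + (a - b) * ⟪y, u - v⟫_ℝ := by
      rw [hgx, real_inner_smul_left, real_inner_smul_left, inner_sub_left]
      ring
    have : ⟪b • y, u - v⟫_ℝ = b * ⟪y, u - v⟫_ℝ := real_inner_smul_left _ _ _
    rw [this] at hdecomp ⊢
    have hgu : ⟪gradient (fun d => gauge (polarSet K) d ^ 2 / 2) u, u - v⟫_ℝ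
        = a * ⟪x, u - v⟫_ℝ := by rw [hgx, real_inner_smul_left]
    rw [hgu] at hdecomp
    linarith [hsub, hdecomp.symm.le]
  -- final assembly
  rw [← mul_le_mul_iff_right₀ hα]
  have hRHS : α * (4 * ((α + 1) / α) * t ^ 2) = 4 * (α + 1) * t ^ 2 := by
    field_simp
  rw [hRHS]
  have hb2 : α * breg (fun d => gauge (polarSet K) d ^ 2 / 2) u v
      ≤ α * (a * s * t + t * t) := by
    apply mul_le_mul_of_nonneg_left _ hα.le
    linarith
  have hb3 : α * (a * s) * t ≤ 4 * t * t := mul_le_mul_of_nonneg_right claim1 htnon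
  nlinarith [hb2, hb3, mul_nonneg (mul_nonneg hα.le htnon) htnon,
    mul_nonneg htnon htnon]
end
end

section
/- Let K ⊂ ℝⁿ be a compact set that is strictly convex, smooth, and has 0 in its interior, and define F_K(x) = −ln(1 − ‖x‖_K) − ‖x‖_K on D_K = {x ∈ ℝⁿ : ‖x‖_K < 1}. Then F_K is a Legendre function on D_K: it is strictly convex with continuous first partial derivatives on D_K, and ‖∇F_K(x)‖ → +∞ as x tends to the boundary of D_K; moreover its Fenchel conjugate F_K* is differentiable on all of ℝⁿ, and K is contained in the closure of D_K. -/
open scoped InnerProductSpace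
open scoped Pointwise
open MeasureTheory

noncomputable section

set_option linter.unusedSectionVars false
namespace BarrierAux

variable {n : ℕ} {K : Set (Euc n)}

section Basic
variable (hKcomp : IsCompact K) (hKconv : Convex ℝ K) (h0 : (0 : Euc n) ∈ interior K)
include hKcomp hKconv h0

theorem hKnhds : K ∈ nhds (0 : Euc n) := mem_interior_iff_mem_nhds.mp h0

theorem hKabs : Absorbent ℝ K := absorbent_nhds_zero (hKnhds hKcomp hKconv h0)

theorem hKvnb : Bornology.IsVonNBounded ℝ K :=
  NormedSpace.isVonNBounded_iff ℝ |>.mpr hKcomp.isBounded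

theorem gauge_eq_zero' (hx : gauge K x = 0) : x = 0 :=
  (gauge_eq_zero (hKabs hKcomp hKconv h0) (hKvnb hKcomp hKconv h0)).mp hx

theorem gauge_pos' (hx : x ≠ 0) : 0 < gauge K x :=
  (gauge_pos (hKabs hKcomp hKconv h0) (hKvnb hKcomp hKconv h0)).mpr hx

theorem mem_K_of_gauge_le_one (hx : gauge K x ≤ 1) : x ∈ K := by
  have := (gauge_le_one_iff_mem_closure hKconv (hKnhds hKcomp hKconv h0)).mp hx
  rwa [hKcomp.isClosed.closure_eq] at this

theorem gauge_le_C : ∃ C > 0, ∀ x : Euc n, gauge K x ≤ C * ‖x‖ := by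
  obtain ⟨ε, hε, hball⟩ := Metric.mem_nhds_iff.mp (hKnhds hKcomp hKconv h0)
  refine ⟨2 / ε, by positivity, fun x => ?_⟩
  rcases eq_or_ne x 0 with rfl | hx
  · simp [gauge_zero]
  · have hnx : (0:ℝ) < ‖x‖ := norm_pos_iff.mpr hx
    have hx' : x ∈ (2 * ‖x‖ / ε) • K := by
      refine ⟨(ε / (2 * ‖x‖)) • x, hball ?_, ?_⟩
      · simp only [Metric.mem_ball, dist_zero_right, norm_smul]
        rw [Real.norm_eq_abs, abs_of_pos (by positivity)]
        have : ε / (2 * ‖x‖) * ‖x‖ = ε / 2 := by field_simp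
        rw [this]; linarith
      · dsimp only
        rw [smul_smul, show (2 * ‖x‖ / ε) * (ε / (2 * ‖x‖)) = 1 by field_simp]
        simp
    calc gauge K x ≤ 2 * ‖x‖ / ε := gauge_le_of_mem (by positivity) hx'
    _ = 2 / ε * ‖x‖ := by ring

theorem norm_le_R : ∃ R > 0, ∀ x ∈ K, ‖x‖ ≤ R := by
  obtain ⟨R, hR⟩ := hKcomp.isBounded.subset_closedBall 0
  exact ⟨max R 1, lt_of_lt_of_le one_pos (le_max_right _ _), fun x hx => by
    have := hR hx
    rw [Metric.mem_closedBall, dist_zero_right] at this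
    exact this.trans (le_max_left _ _)⟩

theorem gauge_ge_norm : ∃ c > 0, ∀ x : Euc n, c * ‖x‖ ≤ gauge K x := by
  obtain ⟨R, hR, hRK⟩ := norm_le_R hKcomp hKconv h0
  refine ⟨R⁻¹, by positivity, fun x => ?_⟩
  have : K ⊆ Metric.closedBall 0 R := fun y hy => by
    rw [Metric.mem_closedBall, dist_zero_right]; exact hRK y hy
  have h := le_gauge_of_subset_closedBall (s := K) (x := x) (hKabs hKcomp hKconv h0) hR.le this
  rw [div_eq_inv_mul] at h
  exact h

theorem K_subset_closure_interior : K ⊆ closure (interior K) := by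
  intro x hx
  have h1 : Filter.Tendsto (fun k : ℕ => x + (1 / (k + 1) : ℝ) • ((0:Euc n) - x))
      Filter.atTop (nhds x) := by
    have h2 : Filter.Tendsto (fun k : ℕ => (1 / (k + 1) : ℝ)) Filter.atTop (nhds 0) :=
      tendsto_one_div_add_atTop_nhds_zero_nat
    have := (h2.smul_const ((0:Euc n) - x)).const_add x
    simpa using this
  refine mem_closure_of_tendsto h1 (Filter.Eventually.of_forall fun k => ?_)
  exact hKconv.add_smul_sub_mem_interior hx h0
    ⟨by positivity, by rw [div_le_one (by positivity)]; linarith⟩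

end Basic

section Polar
variable (hKcomp : IsCompact K) (hKconv : Convex ℝ K) (h0 : (0 : Euc n) ∈ interior K)
include hKcomp hKconv h0

omit hKcomp hKconv h0 in
theorem zero_mem_polar : (0 : Euc n) ∈ polarSet K := fun x _ => by simp

omit hKcomp hKconv h0 in
theorem polar_isClosed : IsClosed (polarSet K) := by
  have : polarSet K = ⋂ x ∈ K, {d : Euc n | ⟪d, x⟫_ℝ ≤ 1} := by
    ext d; simp [polarSet]
  rw [this]
  exact isClosed_biInter fun x _ =>
    isClosed_le (Continuous.inner continuous_id continuous_const) continuous_const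

theorem polar_bounded : ∃ Rp > 0, ∀ d ∈ polarSet K, ‖d‖ ≤ Rp := by
  obtain ⟨ε, hε, hball⟩ := Metric.mem_nhds_iff.mp (hKnhds hKcomp hKconv h0)
  refine ⟨2 / ε, by positivity, fun d hd => ?_⟩
  rcases eq_or_ne d 0 with rfl | hd0
  · simp; positivity
  · have hnd : (0:ℝ) < ‖d‖ := norm_pos_iff.mpr hd0
    have hy : ((ε/2) * ‖d‖⁻¹) • d ∈ K := by
      refine hball ?_
      simp only [Metric.mem_ball, dist_zero_right, norm_smul, Real.norm_eq_abs,
        abs_of_pos (by positivity : (0:ℝ) < (ε/2) * ‖d‖⁻¹)]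
      rw [mul_assoc, inv_mul_cancel₀ hnd.ne']
      linarith
    have h1 := hd _ hy
    rw [real_inner_smul_right, real_inner_self_eq_norm_sq] at h1
    have : ε / 2 * ‖d‖⁻¹ * ‖d‖ ^ 2 = ε / 2 * ‖d‖ := by
      field_simp
    rw [this] at h1
    rw [div_mul_eq_mul_div, le_div_iff₀ hε] at *
    nlinarith

theorem polar_isCompact : IsCompact (polarSet K) := by
  obtain ⟨Rp, hRp, h⟩ := polar_bounded hKcomp hKconv h0
  exact (isCompact_closedBall 0 Rp).of_isClosed_subset (polar_isClosed (K := K))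
    (fun d hd => by rw [Metric.mem_closedBall, dist_zero_right]; exact h d hd)

theorem inner_le_gauge {d : Euc n} (hd : d ∈ polarSet K) (x : Euc n) :
    ⟪d, x⟫_ℝ ≤ gauge K x := by
  rcases eq_or_ne x 0 with rfl | hx
  · simp [gauge_zero]
  · have hg : 0 < gauge K x := gauge_pos' hKcomp hKconv h0 hx
    have hw : (gauge K x)⁻¹ • x ∈ K := by
      apply mem_K_of_gauge_le_one hKcomp hKconv h0
      rw [gauge_smul_of_nonneg (by positivity)]
      simp [smul_eq_mul, inv_mul_cancel₀ hg.ne']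
    have h1 := hd _ hw
    rw [real_inner_smul_right] at h1
    calc ⟪d, x⟫_ℝ = gauge K x * ((gauge K x)⁻¹ * ⟪d, x⟫_ℝ) := by
            field_simp
      _ ≤ gauge K x * 1 := by
            apply mul_le_mul_of_nonneg_left _ hg.le
            exact h1
      _ = gauge K x := mul_one _

theorem exists_maximizer (x : Euc n) :
    ∃ d ∈ polarSet K, ⟪d, x⟫_ℝ = gauge K x := by
  rcases eq_or_ne x 0 with rfl | hx
  · exact ⟨0, zero_mem_polar, by simp [gauge_zero]⟩
  · have hg : 0 < gauge K x := gauge_pos' hKcomp hKconv h0 hx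
    set z := (gauge K x)⁻¹ • x with hz
    have hgz : gauge K z = 1 := by
      rw [hz, gauge_smul_of_nonneg (by positivity)]
      simp [smul_eq_mul, inv_mul_cancel₀ hg.ne']
    have hzK : z ∈ K := mem_K_of_gauge_le_one hKcomp hKconv h0 hgz.le
    have hznotint : z ∉ interior K := by
      intro h
      have := (gauge_lt_one_iff_mem_interior hKconv (hKnhds hKcomp hKconv h0)).mpr h
      rw [hgz] at this; exact lt_irrefl 1 this
    obtain ⟨f, hf⟩ := geometric_hahn_banach_open_point hKconv.interior isOpen_interior hznotint
    have hfz : 0 < f z := by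
      have := hf 0 h0
      simpa using this
    have hfK : ∀ y ∈ K, f y ≤ f z := by
      intro y hy
      have hy' : y ∈ closure (interior K) := K_subset_closure_interior hKcomp hKconv h0 hy
      have hcl : closure (interior K) ⊆ {w : Euc n | f w ≤ f z} := by
        apply closure_minimal
        · exact fun w hw => (hf w hw).le
        · exact isClosed_le f.continuous continuous_const
      exact hcl hy'
    refine ⟨(f z)⁻¹ • ((InnerProductSpace.toDual ℝ (Euc n)).symm f), ?_, ?_⟩
    · intro y hy
      rw [real_inner_smul_left, InnerProductSpace.toDual_symm_apply]
      rw [inv_mul_le_iff₀ hfz]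
      exact (hfK y hy).trans (by linarith)
    · rw [real_inner_smul_left, InnerProductSpace.toDual_symm_apply]
      have hxz : x = gauge K x • z := by
        rw [hz, smul_smul, mul_inv_cancel₀ hg.ne', one_smul]
      have hfx : f x = gauge K x * f z := by
        conv_lhs => rw [hxz]
        rw [ContinuousLinearMap.map_smul, smul_eq_mul]
      rw [hfx]
      field_simp

end Polar

section Danskin
variable {C : Set (Euc n)} {m : Euc n → Euc n} {σ : Euc n → ℝ}

theorem sigma_continuous (hC : IsCompact C) (hmC : ∀ x, m x ∈ C)
    (hσ : ∀ x, ⟪m x, x⟫_ℝ = σ x) (hub : ∀ x, ∀ d ∈ C, ⟪d, x⟫_ℝ ≤ σ x) :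
    Continuous σ := by
  obtain ⟨R, hR⟩ := hC.isBounded.subset_closedBall 0
  have key : ∀ x y : Euc n, σ x - σ y ≤ R * ‖x - y‖ := by
    intro x y
    have h1 : σ x = ⟪m x, y⟫_ℝ + ⟪m x, x - y⟫_ℝ := by
      rw [← inner_add_right]; simp [hσ x]
    have h2 : ⟪m x, y⟫_ℝ ≤ σ y := hub y (m x) (hmC x)
    have h3 : ⟪m x, x - y⟫_ℝ ≤ ‖m x‖ * ‖x - y‖ := real_inner_le_norm _ _
    have h4 : ‖m x‖ ≤ R := by
      have := hR (hmC x); rwa [Metric.mem_closedBall, dist_zero_right] at this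
    nlinarith [norm_nonneg (x - y), norm_nonneg (m x)]
  have hR0 : 0 ≤ R := le_trans (norm_nonneg (m 0)) (by
    have := hR (hmC 0); rwa [Metric.mem_closedBall, dist_zero_right] at this)
  have : LipschitzWith (Real.toNNReal R) σ := by
    apply LipschitzWith.of_dist_le_mul
    intro x y
    rw [Real.dist_eq, Real.coe_toNNReal R hR0, abs_sub_le_iff]
    constructor
    · have := key x y; rwa [← dist_eq_norm] at this
    · have := key y x; rwa [← dist_eq_norm, dist_comm] at this
  exact this.continuous

theorem sel_continuousAt (hC : IsCompact C) (hmC : ∀ x, m x ∈ C)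
    (hσ : ∀ x, ⟪m x, x⟫_ℝ = σ x) (hub : ∀ x, ∀ d ∈ C, ⟪d, x⟫_ℝ ≤ σ x)
    {x₀ : Euc n} (huniq : ∀ d ∈ C, ⟪d, x₀⟫_ℝ = σ x₀ → d = m x₀) :
    ContinuousAt m x₀ := by
  have hσc : Continuous σ := sigma_continuous hC hmC hσ hub
  unfold ContinuousAt
  apply Filter.tendsto_of_subseq_tendsto
  intro ns hns
  obtain ⟨a, haC, φ, hφmono, hφ⟩ := hC.tendsto_subseq (x := fun k => m (ns k)) (fun k => hmC _)
  refine ⟨φ, ?_⟩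
  have hnsφ : Filter.Tendsto (fun k => ns (φ k)) Filter.atTop (nhds x₀) :=
    hns.comp hφmono.tendsto_atTop
  have h1 : Filter.Tendsto (fun k => (⟪m (ns (φ k)), ns (φ k)⟫_ℝ)) Filter.atTop
      (nhds (⟪a, x₀⟫_ℝ)) := by
    exact Filter.Tendsto.inner hφ hnsφ
  have h2 : Filter.Tendsto (fun k => σ (ns (φ k))) Filter.atTop (nhds (σ x₀)) :=
    (hσc.tendsto x₀).comp hnsφ
  have h3 : (fun k => (⟪m (ns (φ k)), ns (φ k)⟫_ℝ)) = fun k => σ (ns (φ k)) := by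
    funext k; exact hσ _
  rw [h3] at h1
  have ha : (⟪a, x₀⟫_ℝ) = σ x₀ := tendsto_nhds_unique h1 h2
  have : a = m x₀ := huniq a haC ha
  rw [← this]
  exact hφ

theorem sel_hasGradientAt (hC : IsCompact C) (hmC : ∀ x, m x ∈ C)
    (hσ : ∀ x, ⟪m x, x⟫_ℝ = σ x) (hub : ∀ x, ∀ d ∈ C, ⟪d, x⟫_ℝ ≤ σ x)
    {x₀ : Euc n} (hcont : ContinuousAt m x₀) :
    HasGradientAt σ (m x₀) x₀ := by
  rw [hasGradientAt_iff_hasFDerivAt]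
  rw [hasFDerivAt_iff_isLittleO_nhds_zero]
  rw [Asymptotics.isLittleO_iff]
  intro c hc
  have hev : ∀ᶠ h in nhds (0 : Euc n), ‖m (x₀ + h) - m x₀‖ ≤ c := by
    have haux : Filter.Tendsto (fun h : Euc n => x₀ + h) (nhds 0) (nhds x₀) := by
      have : Filter.Tendsto (fun h : Euc n => x₀ + h) (nhds 0) (nhds (x₀ + 0)) :=
        (continuous_const.add continuous_id).tendsto 0
      simpa using this
    have : Filter.Tendsto (fun h : Euc n => m (x₀ + h)) (nhds 0) (nhds (m x₀)) :=
      hcont.tendsto.comp haux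
    have := this.sub_const (m x₀)
    rw [sub_self] at this
    have := (continuous_norm.tendsto 0).comp this
    simp only [norm_zero] at this
    exact this.eventually_le_const hc
  filter_upwards [hev] with h hh
  have key0 : (0:ℝ) ≤ σ (x₀ + h) - σ x₀ - ⟪m x₀, h⟫_ℝ := by
    have h1 : ⟪m x₀, x₀ + h⟫_ℝ ≤ σ (x₀ + h) := hub _ (m x₀) (hmC x₀)
    have h2 : ⟪m x₀, x₀ + h⟫_ℝ = σ x₀ + ⟪m x₀, h⟫_ℝ := by
      rw [inner_add_right, hσ x₀]
    linarith
  have key1 : σ (x₀ + h) - σ x₀ - ⟪m x₀, h⟫_ℝ ≤ ‖m (x₀ + h) - m x₀‖ * ‖h‖ := by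
    have h1 : σ (x₀ + h) = ⟪m (x₀ + h), x₀⟫_ℝ + ⟪m (x₀ + h), h⟫_ℝ := by
      rw [← inner_add_right]; exact (hσ _).symm
    have h2 : ⟪m (x₀ + h), x₀⟫_ℝ ≤ σ x₀ := hub x₀ _ (hmC _)
    have h3 : ⟪m (x₀ + h), h⟫_ℝ - ⟪m x₀, h⟫_ℝ = ⟪m (x₀ + h) - m x₀, h⟫_ℝ := by
      rw [inner_sub_left]
    have h4 : ⟪m (x₀ + h) - m x₀, h⟫_ℝ ≤ ‖m (x₀ + h) - m x₀‖ * ‖h‖ := real_inner_le_norm _ _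
    linarith
  have : ‖σ (x₀ + h) - σ x₀ - (InnerProductSpace.toDual ℝ (Euc n)) (m x₀) h‖
      = σ (x₀ + h) - σ x₀ - ⟪m x₀, h⟫_ℝ := by
    rw [InnerProductSpace.toDual_apply_apply, Real.norm_eq_abs, abs_of_nonneg key0]
  rw [this]
  calc σ (x₀ + h) - σ x₀ - ⟪m x₀, h⟫_ℝ ≤ ‖m (x₀ + h) - m x₀‖ * ‖h‖ := key1
    _ ≤ c * ‖h‖ := mul_le_mul_of_nonneg_right hh (norm_nonneg _)

end Danskin

open Classical in
def mSel (K : Set (Euc n)) (x : Euc n) : Euc n :=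
  if h : ∃ d ∈ polarSet K, ⟪d, x⟫_ℝ = gauge K x then h.choose else 0

section GaugeGrad
variable (hKcomp : IsCompact K) (hKconv : Convex ℝ K) (h0 : (0 : Euc n) ∈ interior K)
include hKcomp hKconv h0

theorem mSel_spec (x : Euc n) : mSel K x ∈ polarSet K ∧ ⟪mSel K x, x⟫_ℝ = gauge K x := by
  have h := exists_maximizer hKcomp hKconv h0 x
  rw [mSel]
  rw [dif_pos h]
  exact h.choose_spec

theorem mSel_mem (x : Euc n) : mSel K x ∈ polarSet K := (mSel_spec hKcomp hKconv h0 x).1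

theorem mSel_inner (x : Euc n) : ⟪mSel K x, x⟫_ℝ = gauge K x := (mSel_spec hKcomp hKconv h0 x).2

theorem mem_argmax_iff {z : Euc n} (hz : gauge K z = 1) (d : Euc n) :
    (d ∈ polarSet K ∧ ⟪d, z⟫_ℝ = 1) ↔ d ∈ normalCone K z ∩ frontier (polarSet K) := by
  have hzK : z ∈ K := mem_K_of_gauge_le_one hKcomp hKconv h0 hz.le
  constructor
  · rintro ⟨hdP, hdz⟩
    constructor
    · intro y hy
      have : ⟪d, y⟫_ℝ ≤ 1 := hdP y hy
      rw [inner_sub_right, hdz]; linarith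
    · rw [(polar_isClosed (K := K)).frontier_eq]
      refine ⟨hdP, fun hint => ?_⟩
      have hcont : ContinuousAt (fun t : ℝ => t • d) 1 :=
        (continuous_id.smul continuous_const).continuousAt
      have hev : ∀ᶠ t : ℝ in nhds 1, t • d ∈ interior (polarSet K) := by
        apply hcont.eventually_mem (isOpen_interior.mem_nhds ?_)
        simpa using hint
      rw [Metric.eventually_nhds_iff] at hev
      obtain ⟨δ, hδ, hδ'⟩ := hev
      have htP : (1 + δ/2) • d ∈ polarSet K := by
        apply interior_subset
        apply hδ'
        rw [Real.dist_eq]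
        rw [show 1 + δ/2 - 1 = δ/2 by ring]
        rw [abs_of_pos (by positivity)]
        linarith
      have := htP z hzK
      rw [real_inner_smul_left, hdz, mul_one] at this
      linarith
  · rintro ⟨hdN, hdF⟩
    have hdP : d ∈ polarSet K := by
      have := frontier_subset_closure hdF
      rwa [(polar_isClosed (K := K)).closure_eq] at this
    have hub : ∀ y ∈ K, ⟪d, y⟫_ℝ ≤ ⟪d, z⟫_ℝ := by
      intro y hy
      have := hdN y hy
      rw [inner_sub_right] at this
      linarith
    have hs1 : ⟪d, z⟫_ℝ ≤ 1 := hdP z hzK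
    rcases lt_or_eq_of_le hs1 with hlt | heq
    · exfalso
      obtain ⟨R, hR, hRK⟩ := norm_le_R hKcomp hKconv h0
      have hint : d ∈ interior (polarSet K) := by
        rw [mem_interior]
        have hpos : 0 < (1 - ⟪d, z⟫_ℝ) / R := div_pos (by linarith) hR
        refine ⟨Metric.ball d ((1 - ⟪d, z⟫_ℝ) / R), fun e he => ?_, Metric.isOpen_ball,
          Metric.mem_ball_self hpos⟩
        intro y hy
        have h1 : ⟪e - d, y⟫_ℝ = ⟪e, y⟫_ℝ - ⟪d, y⟫_ℝ := by rw [inner_sub_left]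
        have h2 : ⟪e - d, y⟫_ℝ ≤ ‖e - d‖ * ‖y‖ := real_inner_le_norm _ _
        have h3 : ‖e - d‖ < (1 - ⟪d, z⟫_ℝ) / R := by
          rw [← dist_eq_norm]; exact he
        have h4 : ‖y‖ ≤ R := hRK y hy
        have h5 : ⟪d, y⟫_ℝ ≤ ⟪d, z⟫_ℝ := hub y hy
        have h6 : ‖e - d‖ * ‖y‖ ≤ ((1 - ⟪d, z⟫_ℝ) / R) * R :=
          mul_le_mul h3.le h4 (norm_nonneg _) hpos.le
        rw [div_mul_cancel₀ _ hR.ne'] at h6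
        linarith
      rw [frontier, Set.mem_diff] at hdF
      exact hdF.2 hint
    · exact ⟨hdP, heq⟩


theorem argmax_eq (hsmooth : SmoothSet K) {x₀ : Euc n} (hx₀ : x₀ ≠ 0) :
    ∀ d ∈ polarSet K, ⟪d, x₀⟫_ℝ = gauge K x₀ → d = mSel K x₀ := by
  intro d hdP hdx
  have hg : 0 < gauge K x₀ := gauge_pos' hKcomp hKconv h0 hx₀
  set z := (gauge K x₀)⁻¹ • x₀ with hzdef
  have hgz : gauge K z = 1 := by
    rw [hzdef, gauge_smul_of_nonneg (by positivity)]
    simp [smul_eq_mul, inv_mul_cancel₀ hg.ne']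
  have hzF : z ∈ frontier K :=
    (gauge_eq_one_iff_mem_frontier hKconv (hKnhds hKcomp hKconv h0)).mp hgz
  obtain ⟨d₀, _, huniq⟩ := hsmooth z hzF
  have hdz : ⟪d, z⟫_ℝ = 1 := by
    rw [hzdef, real_inner_smul_right, hdx, inv_mul_cancel₀ hg.ne']
  have h1 : d ∈ normalCone K z ∩ frontier (polarSet K) :=
    (mem_argmax_iff hKcomp hKconv h0 hgz d).mp ⟨hdP, hdz⟩
  have hm := mSel_spec hKcomp hKconv h0 x₀
  have hmz : ⟪mSel K x₀, z⟫_ℝ = 1 := by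
    rw [hzdef, real_inner_smul_right, hm.2, inv_mul_cancel₀ hg.ne']
  have h2 : mSel K x₀ ∈ normalCone K z ∩ frontier (polarSet K) :=
    (mem_argmax_iff hKcomp hKconv h0 hgz _).mp ⟨hm.1, hmz⟩
  rw [huniq d h1, huniq _ h2]

theorem mSel_continuousAt (hsmooth : SmoothSet K) {x₀ : Euc n} (hx₀ : x₀ ≠ 0) :
    ContinuousAt (mSel K) x₀ :=
  sel_continuousAt (polar_isCompact hKcomp hKconv h0) (mSel_mem hKcomp hKconv h0)
    (mSel_inner hKcomp hKconv h0) (fun x d hd => inner_le_gauge hKcomp hKconv h0 hd x)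
    (argmax_eq hKcomp hKconv h0 hsmooth hx₀)

theorem gauge_hasGradientAt (hsmooth : SmoothSet K) {x₀ : Euc n} (hx₀ : x₀ ≠ 0) :
    HasGradientAt (gauge K) (mSel K x₀) x₀ :=
  sel_hasGradientAt (polar_isCompact hKcomp hKconv h0) (mSel_mem hKcomp hKconv h0)
    (mSel_inner hKcomp hKconv h0) (fun x d hd => inner_le_gauge hKcomp hKconv h0 hd x)
    (mSel_continuousAt hKcomp hKconv h0 hsmooth hx₀)

end GaugeGrad






def phi (t : ℝ) : ℝ := -Real.log (1 - t) - t
def psi (s : ℝ) : ℝ := s - Real.log (1 + s)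

theorem phi_hasDerivAt {t : ℝ} (ht : t < 1) : HasDerivAt phi ((1 - t)⁻¹ - 1) t := by
  have h1 : HasDerivAt (fun u : ℝ => 1 - u) (-1) t := by
    exact (hasDerivAt_id' t).const_sub 1
  have h2 : HasDerivAt (fun u : ℝ => Real.log (1 - u)) ((1 - t)⁻¹ * (-1)) t :=
    (Real.hasDerivAt_log (by linarith)).comp t h1
  have h3 : HasDerivAt phi (-((1 - t)⁻¹ * (-1)) - 1) t :=
    (h2.neg).sub (hasDerivAt_id' t)
  convert h3 using 1
  ring

theorem phi_continuousAt {t : ℝ} (ht : t < 1) : ContinuousAt phi t :=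
  (phi_hasDerivAt ht).differentiableAt.continuousAt

theorem phi_continuousOn : ContinuousOn phi (Set.Ico (0:ℝ) 1) :=
  fun t ht => (phi_continuousAt ht.2).continuousWithinAt

theorem deriv_phi {t : ℝ} (ht : t < 1) : deriv phi t = (1 - t)⁻¹ - 1 :=
  (phi_hasDerivAt ht).deriv

theorem phi_strictMonoOn : StrictMonoOn phi (Set.Ico (0:ℝ) 1) := by
  apply strictMonoOn_of_deriv_pos (convex_Ico 0 1) phi_continuousOn
  intro x hx
  rw [interior_Ico] at hx
  obtain ⟨hx1, hx2⟩ := hx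
  rw [deriv_phi hx2]
  have h1 : 0 < 1 - x := by linarith
  have h2 : 1 - x < 1 := by linarith
  have : 1 < (1 - x)⁻¹ := (one_lt_inv₀ h1).mpr h2
  linarith

theorem phi_monotoneOn : MonotoneOn phi (Set.Ico (0:ℝ) 1) := phi_strictMonoOn.monotoneOn

theorem phi_strictConvexOn : StrictConvexOn ℝ (Set.Ico (0:ℝ) 1) phi := by
  apply StrictMonoOn.strictConvexOn_of_deriv (convex_Ico 0 1) phi_continuousOn
  rw [interior_Ico]
  intro x hx y hy hxy
  obtain ⟨hx1, hx2⟩ := hx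
  obtain ⟨hy1, hy2⟩ := hy
  rw [deriv_phi hx2, deriv_phi hy2]
  have h1 : 0 < 1 - y := by linarith
  have : (1 - x)⁻¹ < (1 - y)⁻¹ := by
    apply inv_strictAnti₀ h1
    linarith
  linarith

theorem phi_zero : phi 0 = 0 := by simp [phi]

theorem phi_nonneg {t : ℝ} (ht : t ∈ Set.Ico (0:ℝ) 1) : 0 ≤ phi t := by
  rw [← phi_zero]
  exact phi_monotoneOn (by constructor <;> norm_num) ht ht.1

theorem phi_le {t : ℝ} (ht : t ∈ Set.Ico (0:ℝ) 1) : phi t ≤ t^2 / (1 - t) := by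
  have h1 : 0 < 1 - t := by linarith [ht.2]
  have h2 := Real.log_le_sub_one_of_pos (inv_pos.mpr h1)
  rw [Real.log_inv] at h2
  have h3 : (1 - t)⁻¹ - 1 = t / (1 - t) := by field_simp; ring
  rw [h3] at h2
  have : phi t ≤ t / (1 - t) - t := by
    unfold phi; linarith
  calc phi t ≤ t / (1 - t) - t := this
    _ = t^2 / (1 - t) := by field_simp; ring

theorem key_ineq {t s : ℝ} (ht : t ∈ Set.Ico (0:ℝ) 1) (hs : 0 ≤ s) :
    t * s - phi t ≤ psi s := by
  have h1 : 0 < 1 - t := by linarith [ht.2]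
  have h2 : 0 < 1 + s := by linarith
  have h3 := Real.log_le_sub_one_of_pos (mul_pos h1 h2)
  rw [Real.log_mul h1.ne' h2.ne'] at h3
  have h4 : (1 - t) * (1 + s) - 1 = s - t - t * s := by ring
  rw [h4] at h3
  unfold phi psi
  linarith

theorem psi_nonneg {s : ℝ} (hs : 0 ≤ s) : 0 ≤ psi s := by
  have := Real.log_le_sub_one_of_pos (by linarith : (0:ℝ) < 1 + s)
  unfold psi; linarith

theorem psi_le_sq {s : ℝ} (hs : 0 ≤ s) : psi s ≤ s^2 := by
  have h2 : 0 < 1 + s := by linarith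
  have h3 := Real.log_le_sub_one_of_pos (inv_pos.mpr h2)
  rw [Real.log_inv] at h3
  have h4 : (1 + s)⁻¹ - 1 = -(s / (1 + s)) := by field_simp; ring
  rw [h4] at h3
  have h5 : Real.log (1 + s) ≥ s / (1 + s) := by linarith
  have h6 : psi s ≤ s - s / (1 + s) := by unfold psi; linarith
  have h7 : s - s / (1 + s) = s^2 / (1 + s) := by field_simp; ring
  rw [h7] at h6
  calc psi s ≤ s^2 / (1+s) := h6
    _ ≤ s^2 := div_le_self (by positivity) (by linarith)

theorem psi_hasDerivAt {s : ℝ} (hs : -1 < s) : HasDerivAt psi (1 - (1 + s)⁻¹) s := by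
  have h1 : HasDerivAt (fun u : ℝ => 1 + u) 1 s := by
    exact (hasDerivAt_id' s).const_add 1
  have h2 : HasDerivAt (fun u : ℝ => Real.log (1 + u)) ((1 + s)⁻¹ * 1) s :=
    (Real.hasDerivAt_log (by linarith)).comp s h1
  have h3 : HasDerivAt psi (1 - (1 + s)⁻¹ * 1) s :=
    (hasDerivAt_id' s).sub h2
  convert h3 using 1
  ring

theorem FK_eq_phi_gauge (x : Euc n) : FK K x = phi (gauge K x) := rfl




/-- candidate gradient of FK -/
def GK (K : Set (Euc n)) (x : Euc n) : Euc n := ((1 - gauge K x)⁻¹ - 1) • mSel K x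

section FKGrad
variable (hKcomp : IsCompact K) (hKconv : Convex ℝ K) (h0 : (0 : Euc n) ∈ interior K)
  (hsmooth : SmoothSet K)
include hKcomp hKconv h0 hsmooth

theorem FK_hasGradientAt_zero : HasGradientAt (FK K) (GK K 0) 0 := by
  have hGK0 : GK K 0 = 0 := by
    rw [GK, gauge_zero]; norm_num
  rw [hGK0, hasGradientAt_iff_hasFDerivAt, hasFDerivAt_iff_isLittleO_nhds_zero,
    Asymptotics.isLittleO_iff]
  intro c hc
  obtain ⟨C, hC, hCle⟩ := gauge_le_C hKcomp hKconv h0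
  have hcont : ContinuousAt (gauge K) 0 := continuousAt_gauge hKconv (hKnhds hKcomp hKconv h0)
  have hev : ∀ᶠ h : Euc n in nhds 0, gauge K h < min (1/2) (c / (2 * C)) := by
    have : Filter.Tendsto (gauge K) (nhds 0) (nhds 0) := by
      simpa [gauge_zero] using hcont.tendsto
    exact this.eventually_lt_const (by positivity)
  filter_upwards [hev] with h hh
  have hg0 : 0 ≤ gauge K h := gauge_nonneg h
  have hg1 : gauge K h < 1/2 := lt_of_lt_of_le hh (min_le_left _ _)
  have hg2 : gauge K h < c / (2 * C) := lt_of_lt_of_le hh (min_le_right _ _)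
  have hIco : gauge K h ∈ Set.Ico (0:ℝ) 1 := ⟨hg0, by linarith⟩
  have hFK : FK K (0 + h) - FK K 0 - (InnerProductSpace.toDual ℝ (Euc n)) 0 h
      = phi (gauge K h) := by
    simp [FK_eq_phi_gauge, phi_zero, gauge_zero]
  rw [hFK, Real.norm_eq_abs, abs_of_nonneg (phi_nonneg hIco)]
  have h1 : phi (gauge K h) ≤ (gauge K h)^2 / (1 - gauge K h) := phi_le hIco
  have h2 : (gauge K h)^2 / (1 - gauge K h) ≤ 2 * (gauge K h)^2 := by
    rw [div_le_iff₀ (by linarith)]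
    nlinarith
  have h3 : gauge K h ≤ C * ‖h‖ := hCle h
  have h4 : 2 * (gauge K h)^2 ≤ 2 * (c / (2*C)) * (C * ‖h‖) := by
    nlinarith
  have h5 : 2 * (c / (2*C)) * (C * ‖h‖) = c * ‖h‖ := by field_simp
  calc phi (gauge K h) ≤ (gauge K h)^2 / (1 - gauge K h) := h1
    _ ≤ 2 * (gauge K h)^2 := h2
    _ ≤ 2 * (c / (2*C)) * (C * ‖h‖) := h4
    _ = c * ‖h‖ := h5

theorem FK_hasGradientAt {x : Euc n} (hx : gauge K x < 1) :
    HasGradientAt (FK K) (GK K x) x := by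
  rcases eq_or_ne x 0 with rfl | hx0
  · exact FK_hasGradientAt_zero hKcomp hKconv h0 hsmooth
  · have hgauge : HasGradientAt (gauge K) (mSel K x) x :=
      gauge_hasGradientAt hKcomp hKconv h0 hsmooth hx0
    have hgauge' : HasFDerivAt (gauge K) (InnerProductSpace.toDual ℝ (Euc n) (mSel K x)) x :=
      hasGradientAt_iff_hasFDerivAt.mp hgauge
    have hphi : HasDerivAt phi ((1 - gauge K x)⁻¹ - 1) (gauge K x) := phi_hasDerivAt hx
    have hcomp := hphi.comp_hasFDerivAt x hgauge'
    rw [hasGradientAt_iff_hasFDerivAt, GK, LinearIsometryEquiv.map_smul]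
    exact hcomp

theorem gradient_FK_eq {x : Euc n} (hx : gauge K x < 1) :
    gradient (FK K) x = GK K x :=
  (FK_hasGradientAt hKcomp hKconv h0 hsmooth hx).gradient

theorem FK_differentiableAt {x : Euc n} (hx : gauge K x < 1) :
    DifferentiableAt ℝ (FK K) x :=
  (FK_hasGradientAt hKcomp hKconv h0 hsmooth hx).differentiableAt

theorem GK_continuousAt {x : Euc n} (hx : gauge K x < 1) :
    ContinuousAt (GK K) x := by
  have hgc : Continuous (gauge K) := continuous_gauge hKconv (hKnhds hKcomp hKconv h0)
  rcases eq_or_ne x 0 with rfl | hx0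
  · -- squeeze to 0
    have hGK0 : GK K 0 = 0 := by rw [GK, gauge_zero]; norm_num
    rw [ContinuousAt, hGK0]
    obtain ⟨Rp, hRp, hRple⟩ := polar_bounded hKcomp hKconv h0
    have hbound : ∀ y : Euc n, ‖GK K y‖ ≤ |(1 - gauge K y)⁻¹ - 1| * Rp := by
      intro y
      rw [GK, norm_smul, Real.norm_eq_abs]
      exact mul_le_mul_of_nonneg_left (hRple _ (mSel_mem hKcomp hKconv h0 y)) (abs_nonneg _)
    apply squeeze_zero_norm hbound
    have h1 : Filter.Tendsto (fun y : Euc n => |(1 - gauge K y)⁻¹ - 1|) (nhds 0) (nhds 0) := by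
      have h2 : Filter.Tendsto (fun y : Euc n => (1 - gauge K y)⁻¹ - 1) (nhds 0) (nhds 0) := by
        have h3 : ContinuousAt (fun y : Euc n => (1 - gauge K y)⁻¹ - 1) 0 := by
          have hc1 : ContinuousAt (fun y : Euc n => (1 - gauge K y)) 0 :=
            continuousAt_const.sub hgc.continuousAt
          exact (hc1.inv₀ (by simp [gauge_zero])).sub continuousAt_const
        have := h3.tendsto
        simpa [gauge_zero] using this
      have := h2.abs
      simpa using this
    have := h1.mul_const Rp
    simpa using this
  · have hne : (1 - gauge K x) ≠ 0 := by
      intro h; rw [sub_eq_zero] at h; rw [← h] at hx; exact lt_irrefl _ hx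
    apply ContinuousAt.fun_smul
    · apply ContinuousAt.sub _ continuousAt_const
      exact (continuousAt_const.sub hgc.continuousAt).inv₀ hne
    · exact mSel_continuousAt hKcomp hKconv h0 hsmooth hx0

end FKGrad



section StrictConv
variable (hKcomp : IsCompact K) (hKconv : Convex ℝ K) (h0 : (0 : Euc n) ∈ interior K)
  (hstrict : StrictlyConvexSet K)
include hKcomp hKconv h0 hstrict

theorem gauge_combo_lt {x y : Euc n} (hxy : x ≠ y) {c : ℝ} (hc : 0 < c)
    (hgx : gauge K x = c) (hgy : gauge K y = c) {a b : ℝ}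
    (ha : 0 < a) (hb : 0 < b) (hab : a + b = 1) :
    gauge K (a • x + b • y) < c := by
  set mid : Euc n := (1/2 : ℝ) • (x + y) with hmid
  have hmidlt : gauge K mid < c := by
    have hz1 : gauge K (c⁻¹ • x) = 1 := by
      rw [gauge_smul_of_nonneg (by positivity), hgx, smul_eq_mul, inv_mul_cancel₀ hc.ne']
    have hz2 : gauge K (c⁻¹ • y) = 1 := by
      rw [gauge_smul_of_nonneg (by positivity), hgy, smul_eq_mul, inv_mul_cancel₀ hc.ne']
    have hF1 : c⁻¹ • x ∈ frontier K :=
      (gauge_eq_one_iff_mem_frontier hKconv (hKnhds hKcomp hKconv h0)).mp hz1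
    have hF2 : c⁻¹ • y ∈ frontier K :=
      (gauge_eq_one_iff_mem_frontier hKconv (hKnhds hKcomp hKconv h0)).mp hz2
    have hne : c⁻¹ • x ≠ c⁻¹ • y := by
      intro h
      apply hxy
      have := congrArg (fun w => c • w) h
      simpa [smul_smul, mul_inv_cancel₀ hc.ne'] using this
    have hmint := hstrict _ hF1 _ hF2 hne
    have hmeq : midpoint ℝ (c⁻¹ • x) (c⁻¹ • y) = c⁻¹ • mid := by
      rw [midpoint_eq_smul_add, invOf_eq_inv, hmid]
      module
    rw [hmeq] at hmint
    have := (gauge_lt_one_iff_mem_interior hKconv (hKnhds hKcomp hKconv h0)).mpr hmint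
    rw [gauge_smul_of_nonneg (by positivity), smul_eq_mul] at this
    calc gauge K mid = c * (c⁻¹ * gauge K mid) := by field_simp
      _ < c * 1 := by
          apply mul_lt_mul_of_pos_left this hc
      _ = c := mul_one c
  have habs := hKabs hKcomp hKconv h0
  rcases le_total a b with hba | hba
  · have ha2 : 2 * a ≤ 1 := by linarith
    have hid : a • x + b • y = (2*a) • mid + (1 - 2*a) • y := by
      have hb' : b = 1 - a := by linarith
      rw [hmid, hb']
      module
    rw [hid]
    calc gauge K ((2*a) • mid + (1 - 2*a) • y)
        ≤ gauge K ((2*a) • mid) + gauge K ((1 - 2*a) • y) := gauge_add_le hKconv habs _ _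
      _ = (2*a) * gauge K mid + (1 - 2*a) * c := by
          have e1 : gauge K ((2*a) • mid) = (2*a) * gauge K mid := by
            rw [gauge_smul_of_nonneg (by positivity)]; simp [smul_eq_mul]
          have e2 : gauge K ((1 - 2*a) • y) = (1 - 2*a) * c := by
            rw [gauge_smul_of_nonneg (by linarith : (0:ℝ) ≤ 1 - 2*a)]
            simp [smul_eq_mul, hgy]
          rw [e1, e2]
      _ < (2*a) * c + (1 - 2*a) * c := by
          have := mul_lt_mul_of_pos_left hmidlt (by positivity : (0:ℝ) < 2*a)
          linarith
      _ = c := by ring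
  · have hb2 : 2 * b ≤ 1 := by linarith
    have hid : a • x + b • y = (2*b) • mid + (1 - 2*b) • x := by
      have ha' : a = 1 - b := by linarith
      rw [hmid, ha']
      module
    rw [hid]
    calc gauge K ((2*b) • mid + (1 - 2*b) • x)
        ≤ gauge K ((2*b) • mid) + gauge K ((1 - 2*b) • x) := gauge_add_le hKconv habs _ _
      _ = (2*b) * gauge K mid + (1 - 2*b) * c := by
          have e1 : gauge K ((2*b) • mid) = (2*b) * gauge K mid := by
            rw [gauge_smul_of_nonneg (by positivity)]; simp [smul_eq_mul]
          have e2 : gauge K ((1 - 2*b) • x) = (1 - 2*b) * c := by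
            rw [gauge_smul_of_nonneg (by linarith : (0:ℝ) ≤ 1 - 2*b)]
            simp [smul_eq_mul, hgx]
          rw [e1, e2]
      _ < (2*b) * c + (1 - 2*b) * c := by
          have := mul_lt_mul_of_pos_left hmidlt (by positivity : (0:ℝ) < 2*b)
          linarith
      _ = c := by ring

theorem FK_strictConvexOn : StrictConvexOn ℝ {x : Euc n | gauge K x < 1} (FK K) := by
  constructor
  · rw [show {x : Euc n | gauge K x < 1} = interior K from
      gauge_lt_one_eq_interior hKconv (hKnhds hKcomp hKconv h0)]
    exact hKconv.interior
  · intro x hx y hy hxy a b ha hb hab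
    simp only [Set.mem_setOf_eq] at hx hy
    have hgx : gauge K x ∈ Set.Ico (0:ℝ) 1 := ⟨gauge_nonneg _, hx⟩
    have hgy : gauge K y ∈ Set.Ico (0:ℝ) 1 := ⟨gauge_nonneg _, hy⟩
    have hcombo : gauge K (a • x + b • y) ≤ a * gauge K x + b * gauge K y := by
      calc gauge K (a • x + b • y) ≤ gauge K (a • x) + gauge K (b • y) :=
            gauge_add_le hKconv (hKabs hKcomp hKconv h0) _ _
        _ = a * gauge K x + b * gauge K y := by
            rw [gauge_smul_of_nonneg ha.le, gauge_smul_of_nonneg hb.le]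
            simp [smul_eq_mul]
    have hcombo1 : a * gauge K x + b * gauge K y < 1 := by
      have h1 : a * gauge K x < a := by nlinarith [hgx.2]
      have h2 : b * gauge K y ≤ b := by nlinarith [hgy.2]
      linarith
    rcases eq_or_ne (gauge K x) (gauge K y) with heq | hne
    · -- equal gauges
      have hc0 : 0 < gauge K x := by
        rcases lt_or_eq_of_le (gauge_nonneg x : (0:ℝ) ≤ gauge K x) with h | h
        · exact h
        · exfalso
          have hx0 : x = 0 := gauge_eq_zero' hKcomp hKconv h0 h.symm
          have hy0 : y = 0 := gauge_eq_zero' hKcomp hKconv h0 (heq ▸ h.symm  : gauge K y = 0)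
          exact hxy (hx0.trans hy0.symm)
      have hlt : gauge K (a • x + b • y) < gauge K x :=
        gauge_combo_lt hKcomp hKconv h0 hstrict hxy hc0 rfl heq.symm ha hb hab
      have hmono := phi_strictMonoOn (a := gauge K (a • x + b • y)) (b := gauge K x)
        ⟨gauge_nonneg _, by linarith [hgx.2]⟩ hgx hlt
      rw [FK_eq_phi_gauge, FK_eq_phi_gauge, FK_eq_phi_gauge, ← heq]
      simp only [smul_eq_mul]
      have heq2 : a * phi (gauge K x) + b * phi (gauge K x) = phi (gauge K x) := by
        rw [← add_mul, hab, one_mul]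
      linarith [hmono]
    · -- distinct gauges
      have h1 : phi (gauge K (a • x + b • y)) ≤ phi (a * gauge K x + b * gauge K y) :=
        phi_monotoneOn ⟨gauge_nonneg _, lt_of_le_of_lt hcombo hcombo1⟩
          ⟨add_nonneg (mul_nonneg ha.le hgx.1) (mul_nonneg hb.le hgy.1), hcombo1⟩ hcombo
      have h2 := phi_strictConvexOn.2 hgx hgy hne ha hb hab
      simp only [smul_eq_mul] at h2
      rw [FK_eq_phi_gauge, FK_eq_phi_gauge, FK_eq_phi_gauge]
      simp only [smul_eq_mul]
      linarith

end StrictConv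



section Blowup
variable (hKcomp : IsCompact K) (hKconv : Convex ℝ K) (h0 : (0 : Euc n) ∈ interior K)
  (hsmooth : SmoothSet K)
include hKcomp hKconv h0 hsmooth

theorem gradient_blowup {y : Euc n}
    (hy : y ∈ closure {x : Euc n | gauge K x < 1} \ {x : Euc n | gauge K x < 1}) :
    Filter.Tendsto (fun x => ‖gradient (FK K) x‖)
      (nhdsWithin y {x : Euc n | gauge K x < 1}) Filter.atTop := by
  have hgc : Continuous (gauge K) := continuous_gauge hKconv (hKnhds hKcomp hKconv h0)
  set D : Set (Euc n) := {x : Euc n | gauge K x < 1} with hD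
  have hDint : D = interior K := gauge_lt_one_eq_interior hKconv (hKnhds hKcomp hKconv h0)
  have hyK : y ∈ K := by
    have h1 : closure D ⊆ K := by
      rw [hDint]
      exact (closure_mono interior_subset).trans hKcomp.isClosed.closure_eq.subset
    exact h1 hy.1
  have hgy : gauge K y = 1 := by
    have h1 : gauge K y ≤ 1 := gauge_le_one_of_mem hyK
    have h2 : ¬ gauge K y < 1 := hy.2
    linarith [lt_or_eq_of_le h1 |>.resolve_left h2]
  have hy0 : y ≠ 0 := by
    intro h
    rw [h, gauge_zero] at hgy
    norm_num at hgy
  have hny : (0:ℝ) < ‖y‖ := norm_pos_iff.mpr hy0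
  set L := nhdsWithin y D with hL
  -- gauge tends to 1 along L
  have hgt : Filter.Tendsto (gauge K) L (nhds 1) := by
    rw [← hgy]
    exact (hgc.continuousAt.tendsto).mono_left nhdsWithin_le_nhds
  have hnt : Filter.Tendsto (fun x : Euc n => ‖x‖) L (nhds ‖y‖) :=
    (continuous_norm.continuousAt.tendsto).mono_left nhdsWithin_le_nhds
  have ev1 : ∀ᶠ x in L, x ∈ D := eventually_mem_nhdsWithin
  have ev2 : ∀ᶠ x in L, (1:ℝ)/2 < gauge K x :=
    hgt.eventually (eventually_gt_nhds (by norm_num))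
  have ev3 : ∀ᶠ x in L, ‖x‖ < ‖y‖ + 1 :=
    hnt.eventually (eventually_lt_nhds (by linarith))
  -- the lower bound function tends to atTop
  have h1g : Filter.Tendsto (fun x : Euc n => 1 - gauge K x) L (nhdsWithin 0 (Set.Ioi 0)) := by
    rw [tendsto_nhdsWithin_iff]
    constructor
    · have := (Filter.Tendsto.const_sub 1 hgt)
      simpa using this
    · filter_upwards [ev1] with x hx
      simp only [Set.mem_Ioi, sub_pos]
      exact hx
  have hinv : Filter.Tendsto (fun x : Euc n => (1 - gauge K x)⁻¹) L Filter.atTop :=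
    tendsto_inv_nhdsGT_zero.comp h1g
  have hcoef : Filter.Tendsto (fun x : Euc n => (1 - gauge K x)⁻¹ - 1) L Filter.atTop :=
    Filter.tendsto_atTop_add_const_right L (-1) hinv
  have hmul : Filter.Tendsto
      (fun x : Euc n => ((1 - gauge K x)⁻¹ - 1) * (1 / (2 * (‖y‖ + 1)))) L Filter.atTop :=
    Filter.Tendsto.atTop_mul_const (by positivity) hcoef
  apply Filter.tendsto_atTop_mono' L _ hmul
  filter_upwards [ev1, ev2, ev3] with x hx1 hx2 hx3
  have hx0 : x ≠ 0 := by
    intro h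
    rw [h, gauge_zero] at hx2
    norm_num at hx2
  have hnx : (0:ℝ) < ‖x‖ := norm_pos_iff.mpr hx0
  have hgrad : gradient (FK K) x = GK K x := gradient_FK_eq hKcomp hKconv h0 hsmooth hx1
  have hcoefpos : 0 ≤ (1 - gauge K x)⁻¹ - 1 := by
    have hlt : gauge K x < 1 := hx1
    have h2 : 0 < 1 - gauge K x := by linarith
    have h3 : 1 - gauge K x ≤ 1 := by linarith [gauge_nonneg (s := K) x]
    have := (one_le_inv₀ h2).mpr h3
    linarith
  have hmSel : ⟪mSel K x, x⟫_ℝ = gauge K x := mSel_inner hKcomp hKconv h0 x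
  have hmnorm : gauge K x ≤ ‖mSel K x‖ * ‖x‖ := by
    rw [← hmSel]
    exact real_inner_le_norm _ _
  have hmlow : 1 / (2 * (‖y‖ + 1)) ≤ ‖mSel K x‖ := by
    have h4 : gauge K x / ‖x‖ ≤ ‖mSel K x‖ := by
      rw [div_le_iff₀ hnx]
      exact hmnorm
    refine le_trans ?_ h4
    rw [div_le_div_iff₀ (by positivity) hnx]
    nlinarith
  rw [hgrad, GK, norm_smul, Real.norm_eq_abs, abs_of_nonneg hcoefpos]
  exact mul_le_mul_of_nonneg_left hmlow hcoefpos

end Blowup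



open Classical in
def wSel (K : Set (Euc n)) (d : Euc n) : Euc n :=
  if h : ∃ x ∈ K, ∀ y ∈ K, ⟪y, d⟫_ℝ ≤ ⟪x, d⟫_ℝ then h.choose else 0

def suppF (K : Set (Euc n)) (d : Euc n) : ℝ := ⟪wSel K d, d⟫_ℝ

section Supp
variable (hKcomp : IsCompact K) (hKconv : Convex ℝ K) (h0 : (0 : Euc n) ∈ interior K)
include hKcomp hKconv h0

theorem wSel_spec (d : Euc n) :
    wSel K d ∈ K ∧ ∀ y ∈ K, ⟪y, d⟫_ℝ ≤ ⟪wSel K d, d⟫_ℝ := by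
  have hne : K.Nonempty := ⟨0, interior_subset h0⟩
  have hcont : ContinuousOn (fun y : Euc n => ⟪y, d⟫_ℝ) K :=
    (Continuous.inner continuous_id continuous_const).continuousOn
  obtain ⟨x, hxK, hmax⟩ := hKcomp.exists_isMaxOn hne hcont
  have hex : ∃ x ∈ K, ∀ y ∈ K, ⟪y, d⟫_ℝ ≤ ⟪x, d⟫_ℝ := ⟨x, hxK, fun y hy => hmax hy⟩
  rw [wSel]
  rw [dif_pos hex]
  exact ⟨hex.choose_spec.1, hex.choose_spec.2⟩

theorem wSel_mem (d : Euc n) : wSel K d ∈ K := (wSel_spec hKcomp hKconv h0 d).1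

theorem suppF_ub (d : Euc n) : ∀ y ∈ K, ⟪y, d⟫_ℝ ≤ suppF K d :=
  (wSel_spec hKcomp hKconv h0 d).2

theorem suppF_nonneg (d : Euc n) : 0 ≤ suppF K d := by
  have := suppF_ub hKcomp hKconv h0 d 0 (interior_subset h0)
  simpa using this

theorem not_max_of_interior {d : Euc n} (hd : d ≠ 0) {w : Euc n} (hw : w ∈ interior K) :
    ⟪w, d⟫_ℝ < suppF K d := by
  obtain ⟨δ, hδ, hball⟩ := Metric.mem_nhds_iff.mp (mem_interior_iff_mem_nhds.mp hw)
  have hnd : (0:ℝ) < ‖d‖ := norm_pos_iff.mpr hd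
  set w' := w + (δ / (2 * ‖d‖)) • d with hw'
  have hw'K : w' ∈ K := by
    apply hball
    rw [Metric.mem_ball, hw', dist_eq_norm]
    rw [show w + (δ / (2 * ‖d‖)) • d - w = (δ / (2 * ‖d‖)) • d by abel]
    rw [norm_smul, Real.norm_eq_abs, abs_of_pos (by positivity)]
    rw [div_mul_eq_mul_div, mul_comm]
    rw [div_lt_iff₀ (by positivity)]
    nlinarith
  have h1 : ⟪w', d⟫_ℝ = ⟪w, d⟫_ℝ + (δ / (2 * ‖d‖)) * ‖d‖^2 := by
    rw [hw', inner_add_left, real_inner_smul_left, real_inner_self_eq_norm_sq]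
  have h2 : ⟪w', d⟫_ℝ ≤ suppF K d := suppF_ub hKcomp hKconv h0 d w' hw'K
  have h3 : 0 < (δ / (2 * ‖d‖)) * ‖d‖^2 := by positivity
  linarith

theorem supp_unique (hstrict : StrictlyConvexSet K) {d : Euc n} (hd : d ≠ 0) :
    ∀ w ∈ K, ⟪w, d⟫_ℝ = suppF K d → w = wSel K d := by
  intro w hwK hweq
  by_contra hne
  have hfr : ∀ u ∈ K, ⟪u, d⟫_ℝ = suppF K d → u ∈ frontier K := by
    intro u huK hueq
    rw [frontier, hKcomp.isClosed.closure_eq, Set.mem_diff]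
    refine ⟨huK, fun hint => ?_⟩
    have := not_max_of_interior hKcomp hKconv h0 hd hint
    linarith
  have hw1 : w ∈ frontier K := hfr w hwK hweq
  have hw2 : wSel K d ∈ frontier K :=
    hfr _ (wSel_mem hKcomp hKconv h0 d) rfl
  have hmid := hstrict _ hw1 _ hw2 hne
  have hmideq : ⟪midpoint ℝ w (wSel K d), d⟫_ℝ = suppF K d := by
    rw [midpoint_eq_smul_add, invOf_eq_inv, real_inner_smul_left, inner_add_left,
      hweq]
    rw [show ⟪wSel K d, d⟫_ℝ = suppF K d from rfl]
    ring
  have := not_max_of_interior hKcomp hKconv h0 hd hmid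
  linarith

theorem FstarK_eq (d : Euc n) : FstarK K d = psi (suppF K d) := by
  set s := suppF K d with hs
  have hs0 : 0 ≤ s := suppF_nonneg hKcomp hKconv h0 d
  have hub : ∀ v ∈ (fun x => ⟪x, d⟫_ℝ - FK K x) '' {x : Euc n | gauge K x < 1},
      v ≤ psi s := by
    rintro v ⟨x, hx, rfl⟩
    simp only [Set.mem_setOf_eq] at hx
    have hIco : gauge K x ∈ Set.Ico (0:ℝ) 1 := ⟨gauge_nonneg _, hx⟩
    have h1 : ⟪x, d⟫_ℝ ≤ gauge K x * s := by
      rcases eq_or_ne x 0 with rfl | hx0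
      · simp [gauge_zero]
      · have hg : 0 < gauge K x := gauge_pos' hKcomp hKconv h0 hx0
        have hw : (gauge K x)⁻¹ • x ∈ K := by
          apply mem_K_of_gauge_le_one hKcomp hKconv h0
          rw [gauge_smul_of_nonneg (by positivity)]
          simp [smul_eq_mul, inv_mul_cancel₀ hg.ne']
        have h2 := suppF_ub hKcomp hKconv h0 d _ hw
        rw [real_inner_smul_left] at h2
        calc ⟪x, d⟫_ℝ = gauge K x * ((gauge K x)⁻¹ * ⟪x, d⟫_ℝ) := by field_simp
          _ ≤ gauge K x * s := mul_le_mul_of_nonneg_left h2 hg.le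
    have h3 : gauge K x * s - phi (gauge K x) ≤ psi s := key_ineq hIco hs0
    show ⟪x, d⟫_ℝ - FK K x ≤ psi s
    rw [FK_eq_phi_gauge]
    linarith
  have hbdd : BddAbove ((fun x => ⟪x, d⟫_ℝ - FK K x) '' {x : Euc n | gauge K x < 1}) :=
    ⟨psi s, hub⟩
  have hne : (0:ℝ) ∈ (fun x => ⟪x, d⟫_ℝ - FK K x) '' {x : Euc n | gauge K x < 1} := by
    refine ⟨0, ?_, ?_⟩
    · simp [gauge_zero]
    · simp [FK, gauge_zero]
  apply le_antisymm
  · exact csSup_le ⟨0, hne⟩ hub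
  · -- the value at x* achieves psi s
    set t : ℝ := s / (1 + s) with ht
    have ht0 : 0 ≤ t := by positivity
    have ht1 : t < 1 := by
      rw [ht, div_lt_one (by linarith)]
      linarith
    set xstar := t • wSel K d with hxstar
    have hgx : gauge K xstar ≤ t := by
      rw [hxstar, gauge_smul_of_nonneg ht0]
      have := gauge_le_one_of_mem (wSel_mem hKcomp hKconv h0 d)
      calc t • gauge K (wSel K d) = t * gauge K (wSel K d) := by simp [smul_eq_mul]
        _ ≤ t * 1 := mul_le_mul_of_nonneg_left this ht0
        _ = t := mul_one t
    have hgx1 : gauge K xstar < 1 := lt_of_le_of_lt hgx ht1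
    have hval : psi s ≤ ⟪xstar, d⟫_ℝ - FK K xstar := by
      have h1 : ⟪xstar, d⟫_ℝ = t * s := by
        rw [hxstar, real_inner_smul_left, hs]
        rfl
      have h2 : phi (gauge K xstar) ≤ phi t :=
        phi_monotoneOn ⟨gauge_nonneg _, hgx1⟩ ⟨ht0, ht1⟩ hgx
      have h3 : t * s - phi t = psi s := by
        have h1t : 1 - t = (1 + s)⁻¹ := by
          rw [ht]
          field_simp
          ring
        rw [phi, psi, h1t, Real.log_inv]
        have h4 : t * s + t = s := by
          rw [ht]
          field_simp
          ring
        ring_nf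
        ring_nf at h4
        linarith
      rw [FK_eq_phi_gauge]
      linarith
    calc psi s ≤ ⟪xstar, d⟫_ℝ - FK K xstar := hval
      _ ≤ sSup _ := le_csSup hbdd ⟨xstar, hgx1, rfl⟩

theorem FstarK_differentiableAt (hstrict : StrictlyConvexSet K) (d : Euc n) :
    DifferentiableAt ℝ (FstarK K) d := by
  have hfun : FstarK K = fun e => psi (suppF K e) :=
    funext (FstarK_eq hKcomp hKconv h0)
  rw [hfun]
  rcases eq_or_ne d 0 with rfl | hd0
  · -- at zero, quadratic bound
    obtain ⟨R, hR, hRle⟩ := norm_le_R hKcomp hKconv h0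
    apply HasFDerivAt.differentiableAt (f' := 0)
    rw [hasFDerivAt_iff_isLittleO_nhds_zero, Asymptotics.isLittleO_iff]
    intro c hc
    have hev : ∀ᶠ h : Euc n in nhds 0, ‖h‖ < c / R^2 := by
      have : Filter.Tendsto (fun h : Euc n => ‖h‖) (nhds 0) (nhds 0) := by
        simpa using (continuous_norm.tendsto (0 : Euc n))
      exact this.eventually_lt_const (by positivity)
    filter_upwards [hev] with h hh
    have h0' : suppF K 0 = 0 := by
      simp [suppF]
    have hsupn : 0 ≤ suppF K h := suppF_nonneg hKcomp hKconv h0 h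
    have hsle : suppF K h ≤ R * ‖h‖ := by
      rw [suppF]
      calc ⟪wSel K h, h⟫_ℝ ≤ ‖wSel K h‖ * ‖h‖ := real_inner_le_norm _ _
        _ ≤ R * ‖h‖ := by
            apply mul_le_mul_of_nonneg_right _ (norm_nonneg _)
            exact hRle _ (wSel_mem hKcomp hKconv h0 h)
    have hpsi0 : psi 0 = 0 := by simp [psi]
    have hval : psi (suppF K (0 + h)) - psi (suppF K 0) - (0 : Euc n →L[ℝ] ℝ) h
        = psi (suppF K h) := by
      rw [h0', hpsi0]
      simp
    rw [hval, Real.norm_eq_abs, abs_of_nonneg (psi_nonneg hsupn)]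
    calc psi (suppF K h) ≤ (suppF K h)^2 := psi_le_sq hsupn
      _ ≤ (R * ‖h‖)^2 := by nlinarith
      _ = R^2 * ‖h‖ * ‖h‖ := by ring
      _ ≤ R^2 * (c / R^2) * ‖h‖ := by
          have : R^2 * ‖h‖ ≤ R^2 * (c / R^2) := by
            apply mul_le_mul_of_nonneg_left hh.le (by positivity)
          exact mul_le_mul_of_nonneg_right this (norm_nonneg _)
      _ = c * ‖h‖ := by field_simp
  · -- away from zero
    have hcont : ContinuousAt (wSel K) d :=
      sel_continuousAt hKcomp (wSel_mem hKcomp hKconv h0) (fun e => rfl)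
        (suppF_ub hKcomp hKconv h0) (supp_unique hKcomp hKconv h0 hstrict hd0)
    have hgrad : HasGradientAt (suppF K) (wSel K d) d :=
      sel_hasGradientAt hKcomp (wSel_mem hKcomp hKconv h0) (fun e => rfl)
        (suppF_ub hKcomp hKconv h0) hcont
    have hpsi : HasDerivAt psi (1 - (1 + suppF K d)⁻¹) (suppF K d) :=
      psi_hasDerivAt (by linarith [suppF_nonneg hKcomp hKconv h0 d])
    have := hpsi.comp_hasFDerivAt d (hasGradientAt_iff_hasFDerivAt.mp hgrad)
    exact this.differentiableAt

end Supp

end BarrierAux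

/-- The barrier `F_K(x) = -ln(1 - ‖x‖_K) - ‖x‖_K` is a Legendre function on
`D_K = {x | ‖x‖_K < 1}`: strictly convex with continuous first derivatives on `D_K`, gradient
norm blowing up at the boundary of `D_K`; moreover `F_K*` is differentiable on all of `ℝⁿ`
and `K ⊆ closure D_K`. -/
theorem barrier_is_legendre {n : ℕ}
    (K : Set (Euc n)) (hKcomp : IsCompact K) (hKconv : Convex ℝ K)
    (h0 : (0 : Euc n) ∈ interior K)
    (hstrict : StrictlyConvexSet K) (hsmooth : SmoothSet K) :
    StrictConvexOn ℝ {x : Euc n | gauge K x < 1} (FK K) ∧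
    (∀ x ∈ {x : Euc n | gauge K x < 1}, DifferentiableAt ℝ (FK K) x) ∧
    ContinuousOn (fun x => gradient (FK K) x) {x : Euc n | gauge K x < 1} ∧
    (∀ y ∈ closure {x : Euc n | gauge K x < 1} \ {x : Euc n | gauge K x < 1},
      Filter.Tendsto (fun x => ‖gradient (FK K) x‖)
        (nhdsWithin y {x : Euc n | gauge K x < 1}) Filter.atTop) ∧
    (∀ d : Euc n, DifferentiableAt ℝ (FstarK K) d) ∧
    K ⊆ closure {x : Euc n | gauge K x < 1} := by
  refine ⟨BarrierAux.FK_strictConvexOn hKcomp hKconv h0 hstrict, ?_, ?_, ?_, ?_, ?_⟩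
  · intro x hx
    exact BarrierAux.FK_differentiableAt hKcomp hKconv h0 hsmooth hx
  · intro x hx
    apply ContinuousAt.continuousWithinAt
    have hopen : IsOpen {x : Euc n | gauge K x < 1} := by
      rw [gauge_lt_one_eq_interior hKconv (BarrierAux.hKnhds hKcomp hKconv h0)]
      exact isOpen_interior
    have hev : (fun y => gradient (FK K) y) =ᶠ[nhds x] BarrierAux.GK K := by
      filter_upwards [hopen.mem_nhds hx] with y hy
      exact BarrierAux.gradient_FK_eq hKcomp hKconv h0 hsmooth hy
    exact (BarrierAux.GK_continuousAt hKcomp hKconv h0 hsmooth hx).congr hev.symm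
  · intro y hy
    exact BarrierAux.gradient_blowup hKcomp hKconv h0 hsmooth hy
  · intro d
    exact BarrierAux.FstarK_differentiableAt hKcomp hKconv h0 hstrict d
  · rw [gauge_lt_one_eq_interior hKconv (BarrierAux.hKnhds hKcomp hKconv h0)]
    exact BarrierAux.K_subset_closure_interior hKcomp hKconv h0
end
end

section
/- Let K ⊂ ℝⁿ be a strictly convex, smooth, compact set with 0 in its interior such that ℓ₁(r) ⊆ K ⊆ ℓ∞(R) for some r, R > 0. Let x ∈ K with ‖x‖_K < 1, c ∈ K°, η > 0, ξ ∈ {0,1}, and let a ∈ K equal x/‖x‖_K if ξ = 1 and equal ε·r·e_i for some ε ∈ {−1,1} and coordinate i ∈ {1,…,n} if ξ = 0. Define c̃ = (n/r²)(1 − ξ)(⟨a, c⟩/(1 − ‖x‖_K))·a, u = ∇F_K(x) − η c̃, and v = ∇F_K(x), where F_K(x) = −ln(1 − ‖x‖_K) − ‖x‖_K. Then (‖u‖_{K°} − ‖v‖_{K°})/(1 + ‖v‖_{K°}) ≥ −η n R/r. -/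
open scoped InnerProductSpace
open scoped Pointwise
open MeasureTheory

noncomputable section

open Topology
section helpers


variable {n : ℕ}

lemma polarSet_convex (K : Set (Euc n)) : Convex ℝ (polarSet K) := by
  intro d₁ h₁ d₂ h₂ s t hs ht hst y hy
  have g1 := h₁ y hy
  have g2 := h₂ y hy
  simp only [inner_add_left, real_inner_smul_left]
  nlinarith

lemma polarSet_mem_nhds {K : Set (Euc n)} {R : ℝ} (hR : 0 < R) (hlinf : K ⊆ linfBall R) :
    polarSet K ∈ 𝓝 (0 : Euc n) := by
  have hδ : 0 < (Real.sqrt n * R + 1)⁻¹ := by positivity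
  refine Filter.mem_of_superset (Metric.ball_mem_nhds 0 hδ) ?_
  intro d hd y hy
  have hdn : ‖d‖ < (Real.sqrt n * R + 1)⁻¹ := by simpa using hd
  have hyn : ‖y‖ ≤ Real.sqrt n * R := by
    rw [EuclideanSpace.norm_eq]
    have h1 : ∑ j, ‖y j‖ ^ 2 ≤ (n : ℝ) * R ^ 2 := by
      calc ∑ j, ‖y j‖ ^ 2 ≤ ∑ _j : Fin n, R ^ 2 := by
            refine Finset.sum_le_sum fun j _ => ?_
            have h2 := hlinf hy j
            have h3 : ‖y j‖ ≤ R := by rwa [Real.norm_eq_abs]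
            nlinarith [norm_nonneg (y j)]
        _ = (n : ℝ) * R ^ 2 := by simp [mul_comm]
    calc Real.sqrt (∑ j, ‖y j‖ ^ 2) ≤ Real.sqrt ((n : ℝ) * R ^ 2) := Real.sqrt_le_sqrt h1
      _ = Real.sqrt n * R := by
          rw [Real.sqrt_mul (Nat.cast_nonneg n), Real.sqrt_sq hR.le]
  have h2 : ⟪d, y⟫_ℝ ≤ ‖d‖ * ‖y‖ := real_inner_le_norm d y
  have h3 : (Real.sqrt n * R + 1)⁻¹ * (Real.sqrt n * R + 1) = 1 := by
    field_simp
  nlinarith [norm_nonneg d, norm_nonneg y, Real.sqrt_nonneg (n : ℝ)]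

lemma inner_le_gauge_polarSet {K : Set (Euc n)} (habs : Absorbent ℝ (polarSet K))
    {y : Euc n} (hy : y ∈ K) (w : Euc n) : ⟪w, y⟫_ℝ ≤ gauge (polarSet K) w := by
  unfold gauge
  refine le_csInf habs.gauge_set_nonempty ?_
  rintro b ⟨hb, hw⟩
  rw [Set.mem_smul_set] at hw
  obtain ⟨d, hd, rfl⟩ := hw
  rw [real_inner_smul_left]
  have h1 := hd y hy
  nlinarith

lemma gauge_polarSet_le {K : Set (Euc n)} {r R : ℝ} (hr : 0 < r) (hR : 0 < R)
    (hlinf : K ⊆ linfBall R) {w : Euc n} (hw : w ∈ l1Ball r) :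
    gauge (polarSet K) w ≤ r * R := by
  refine gauge_le_of_mem (by positivity) ?_
  rw [Set.mem_smul_set_iff_inv_smul_mem₀ (by positivity : (r * R) ≠ 0)]
  intro y hy
  have hinner : ⟪(r * R)⁻¹ • w, y⟫_ℝ = (r * R)⁻¹ * ∑ j, w j * y j := by
    rw [real_inner_smul_left]
    congr 1
    simp [PiLp.inner_apply, mul_comm]
  have hsum : ∑ j, w j * y j ≤ r * R := by
    calc ∑ j, w j * y j ≤ ∑ j, |w j| * R := by
          refine Finset.sum_le_sum fun j _ => ?_
          have h1 := hlinf hy j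
          have h2 : w j * y j ≤ |w j| * |y j| := by
            rw [← abs_mul]; exact le_abs_self _
          nlinarith [abs_nonneg (w j)]
      _ = (∑ j, |w j|) * R := by rw [Finset.sum_mul]
      _ ≤ r * R := mul_le_mul_of_nonneg_right hw hR.le
  show ⟪(r * R)⁻¹ • w, y⟫_ℝ ≤ 1
  rw [hinner]
  have h4 : (r * R)⁻¹ * (∑ j, w j * y j) ≤ (r * R)⁻¹ * (r * R) :=
    mul_le_mul_of_nonneg_left hsum (by positivity)
  rwa [inv_mul_cancel₀ (by positivity : (r * R) ≠ 0)] at h4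

lemma l1Ball_neg_mem {r : ℝ} {w : Euc n} (hw : w ∈ l1Ball r) : -w ∈ l1Ball r := by
  simpa [l1Ball, abs_neg] using hw

lemma single_mem_l1Ball {r s : ℝ} (h : |s| ≤ r) (i : Fin n) :
    EuclideanSpace.single i s ∈ l1Ball r := by
  simp only [l1Ball, Set.mem_setOf_eq, EuclideanSpace.single_apply, apply_ite abs, abs_zero]
  simpa using h

end helpers

/-- Lower bound on `Θ = (‖u‖_{K°} - ‖v‖_{K°}) / (1 + ‖v‖_{K°})` for the
bandit loss estimate, where `u = ∇F_K(x) - η c̃` and `v = ∇F_K(x)`. -/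
theorem theta_lower_bound {n : ℕ}
    (K : Set (Euc n)) (hKcomp : IsCompact K) (hKconv : Convex ℝ K)
    (h0 : (0 : Euc n) ∈ interior K)
    (hstrict : StrictlyConvexSet K) (hsmooth : SmoothSet K)
    (r R : ℝ) (hr : 0 < r) (hR : 0 < R)
    (hl1 : l1Ball r ⊆ K) (hlinf : K ⊆ linfBall R)
    (x : Euc n) (hxK : x ∈ K) (hx1 : gauge K x < 1)
    (c : Euc n) (hc : c ∈ polarSet K)
    (η : ℝ) (hη : 0 < η)
    (ξ ε : Bool) (i : Fin n)
    (a : Euc n)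
    (ha : a = if ξ then (gauge K x)⁻¹ • x
              else if ε then EuclideanSpace.single i r else EuclideanSpace.single i (-r))
    (ctilde u v : Euc n)
    (hct : ctilde = (((n : ℝ) / r ^ 2) * (if ξ then 0 else 1)
                      * (⟪a, c⟫_ℝ / (1 - gauge K x))) • a)
    (hu : u = gradient (FK K) x - η • ctilde)
    (hv : v = gradient (FK K) x) :
    (gauge (polarSet K) u - gauge (polarSet K) v) / (1 + gauge (polarSet K) v)
      ≥ -(η * n * R / r) := by
  set g := gauge K x with hg
  set G := gauge (polarSet K) with hG
  have hRHS : 0 ≤ η * (n : ℝ) * R / r := by positivity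
  have hGv : 0 ≤ G v := gauge_nonneg v
  have hGu : 0 ≤ G u := gauge_nonneg u
  have hden : 0 < 1 + G v := by linarith
  -- non-differentiable case: gradient is zero
  by_cases hdiff : DifferentiableAt ℝ (FK K) x
  swap
  · have hv0 : v = 0 := by
      rw [hv, gradient_eq_zero_of_not_differentiableAt hdiff]
    have hGv0 : G (0 : Euc n) = 0 := gauge_zero
    rw [hv0, hGv0]
    rw [sub_zero, add_zero, div_one]
    linarith
  -- ξ = true case : ctilde = 0, u = v
  cases ξ with
  | true =>
    have hct0 : ctilde = 0 := by simp [hct]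
    have huv : u = v := by rw [hu, hv, hct0, smul_zero, sub_zero]
    rw [huv, sub_self, zero_div]
    linarith
  | false =>
    -- main case
    have h1g : 0 < 1 - g := by linarith
    have hPconv : Convex ℝ (polarSet K) := polarSet_convex K
    have hPabs : Absorbent ℝ (polarSet K) := absorbent_nhds_zero (polarSet_mem_nhds hR hlinf)
    -- a and -a are in l1Ball r
    have haL1 : a ∈ l1Ball r := by
      rw [ha]
      cases ε <;> simp only [if_true, if_false, Bool.false_eq_true, ite_false, ite_true]
      · exact single_mem_l1Ball (by rw [abs_neg, abs_of_pos hr]) i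
      · exact single_mem_l1Ball (by rw [abs_of_pos hr]) i
    have hnaL1 : -a ∈ l1Ball r := l1Ball_neg_mem haL1
    have haK : a ∈ K := hl1 haL1
    have hnaK : -a ∈ K := hl1 hnaL1
    -- |⟪a, c⟫| ≤ 1
    have hac : |⟪a, c⟫_ℝ| ≤ 1 := by
      rw [abs_le]
      constructor
      · have h1 := hc (-a) hnaK
        rw [inner_neg_right] at h1
        rw [real_inner_comm]; linarith
      · rw [real_inner_comm]; exact hc a haK
    -- gauge bounds on a and -a
    have hGa : G a ≤ r * R := gauge_polarSet_le hr hR hlinf haL1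
    have hGna : G (-a) ≤ r * R := gauge_polarSet_le hr hR hlinf hnaL1
    -- bound on the scalar
    set s : ℝ := ((n : ℝ) / r ^ 2) * (if (false : Bool) then 0 else 1) * (⟪a, c⟫_ℝ / (1 - g))
      with hs
    have hsval : s = ((n : ℝ) / r ^ 2) * (⟪a, c⟫_ℝ / (1 - g)) := by
      simp [hs]
    have hsabs : |s| ≤ ((n : ℝ) / r ^ 2) / (1 - g) := by
      rw [hsval, abs_mul, abs_of_nonneg (by positivity : (0 : ℝ) ≤ (n : ℝ) / r ^ 2),
        abs_div, abs_of_pos h1g]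
      calc (n : ℝ) / r ^ 2 * (|⟪a, c⟫_ℝ| / (1 - g))
          ≤ (n : ℝ) / r ^ 2 * (1 / (1 - g)) := by
            apply mul_le_mul_of_nonneg_left _ (by positivity)
            apply div_le_div_of_nonneg_right hac h1g.le
        _ = (n : ℝ) / r ^ 2 / (1 - g) := by rw [mul_one_div]
    -- gauge bound on ctilde
    have hGsa : ∀ t : ℝ, G (t • a) ≤ |t| * (r * R) := by
      intro t
      rcases le_or_gt 0 t with ht | ht
      · rw [hG, gauge_smul_of_nonneg ht, smul_eq_mul, abs_of_nonneg ht]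
        exact mul_le_mul_of_nonneg_left hGa ht
      · have : t • a = (-t) • (-a) := by simp
        rw [this, hG, gauge_smul_of_nonneg (by linarith : (0:ℝ) ≤ -t), smul_eq_mul,
          abs_of_neg ht]
        exact mul_le_mul_of_nonneg_left hGna (by linarith)
    have hGct : G ctilde ≤ ((n : ℝ) * R / r) / (1 - g) := by
      have h1 : ctilde = s • a := by rw [hct, hs]
      calc G ctilde = G (s • a) := by rw [h1]
        _ ≤ |s| * (r * R) := hGsa s
        _ ≤ (((n : ℝ) / r ^ 2) / (1 - g)) * (r * R) := by
            apply mul_le_mul_of_nonneg_right hsabs (by positivity)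
        _ = ((n : ℝ) * R / r) / (1 - g) := by field_simp
    -- triangle inequality
    have htri : G v ≤ G u + η * G ctilde := by
      have h1 : v = u + η • ctilde := by rw [hu, hv]; abel
      calc G v = gauge (polarSet K) (u + η • ctilde) := by rw [← h1]
        _ ≤ gauge (polarSet K) u + gauge (polarSet K) (η • ctilde) :=
            gauge_add_le hPconv hPabs u (η • ctilde)
        _ = G u + η * G ctilde := by
            rw [hG, gauge_smul_of_nonneg hη.le, smul_eq_mul]
    -- denominator bound : 1/(1-g) ≤ 1 + G v
    have hden2 : 1 / (1 - g) ≤ 1 + G v := by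
      rcases eq_or_lt_of_le (gauge_nonneg x : (0:ℝ) ≤ g) with hg0 | hgpos
      · have hgz : g = 0 := hg0.symm
        rw [hgz]; norm_num; linarith
      · -- gauge identity via derivative
        have hgradv : HasGradientAt (FK K) v x := by
          rw [hv]; exact hdiff.hasGradientAt
        have hgradF : HasFDerivAt (FK K) (InnerProductSpace.toDual ℝ (Euc n) v) x :=
          hgradv.hasFDerivAt
        have hline : HasDerivAt (fun t : ℝ => t • x) x 1 := by
          simpa using (hasDerivAt_id (1 : ℝ)).smul_const x
        have hcomp : HasDerivAt (fun t : ℝ => FK K (t • x)) (⟪v, x⟫_ℝ) 1 := by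
          have h2 : HasFDerivAt (FK K) (InnerProductSpace.toDual ℝ (Euc n) v)
              ((fun t : ℝ => t • x) 1) := by simpa using hgradF
          have h4 := h2.comp_hasDerivAt 1 hline
          simp at h4
          exact h4
        -- explicit derivative
        have hEq : (fun t : ℝ => FK K (t • x)) =ᶠ[𝓝 (1 : ℝ)]
            (fun t : ℝ => -Real.log (1 - t * g) - t * g) := by
          filter_upwards [Ioi_mem_nhds (zero_lt_one : (0:ℝ) < 1)] with t ht
          rw [FK, gauge_smul_of_nonneg (le_of_lt ht), smul_eq_mul, ← hg]
        have hd1 : HasDerivAt (fun t : ℝ => 1 - t * g) (-g) 1 := by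
          simpa using ((hasDerivAt_id (1 : ℝ)).mul_const g).const_sub 1
        have hd2 : HasDerivAt (fun t : ℝ => Real.log (1 - t * g)) ((1 - g)⁻¹ * (-g)) 1 := by
          have h3 := (Real.hasDerivAt_log (by simp; linarith : (1 : ℝ) - 1 * g ≠ 0)).comp 1 hd1
          simp at h3
          rw [mul_neg]
          exact h3
        have hd3 : HasDerivAt (fun t : ℝ => -Real.log (1 - t * g) - t * g)
            (-((1 - g)⁻¹ * (-g)) - 1 * g) 1 :=
          hd2.neg.sub ((hasDerivAt_id (1 : ℝ)).mul_const g)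
        have hderiv : HasDerivAt (fun t : ℝ => FK K (t • x))
            (-((1 - g)⁻¹ * (-g)) - 1 * g) 1 :=
          hd3.congr_of_eventuallyEq hEq
        have hvx : ⟪v, x⟫_ℝ = -((1 - g)⁻¹ * (-g)) - 1 * g := hcomp.unique hderiv
        have hvx' : ⟪v, x⟫_ℝ = g ^ 2 / (1 - g) := by
          rw [hvx]; field_simp; ring
        -- x / g ∈ K
        have hxg : g⁻¹ • x ∈ K := by
          have hcl : closure K = K := hKcomp.isClosed.closure_eq
          have h4 : gauge K (g⁻¹ • x) ≤ 1 := by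
            rw [gauge_smul_of_nonneg (inv_nonneg.mpr hgpos.le), smul_eq_mul, ← hg,
              inv_mul_cancel₀ (ne_of_gt hgpos)]
          have h5 := (gauge_le_one_iff_mem_closure hKconv
            (mem_interior_iff_mem_nhds.mp h0)).mp h4
          rwa [hcl] at h5
        have h6 : ⟪v, g⁻¹ • x⟫_ℝ ≤ G v := inner_le_gauge_polarSet hPabs hxg v
        rw [real_inner_smul_right, hvx'] at h6
        have h7 : g⁻¹ * (g ^ 2 / (1 - g)) = g / (1 - g) := by
          field_simp
        rw [h7] at h6
        have h8 : 1 / (1 - g) = 1 + g / (1 - g) := by field_simp; ring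
        linarith
    -- final combination
    have hnum : -(η * G ctilde) ≤ G u - G v := by linarith
    have hct0 : 0 ≤ G ctilde := gauge_nonneg ctilde
    have hstep : η * G ctilde / (1 + G v) ≤ η * ((n : ℝ) * R / r) := by
      have hfrac : η * G ctilde / (1 + G v)
          ≤ (η * (((n : ℝ) * R / r) / (1 - g))) / (1 / (1 - g)) := by
        apply div_le_div₀ (by positivity) _ (by positivity) hden2
        exact mul_le_mul_of_nonneg_left hGct hη.le
      have heq : (η * (((n : ℝ) * R / r) / (1 - g))) / (1 / (1 - g))
          = η * ((n : ℝ) * R / r) := by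
        field_simp
      rw [heq] at hfrac; exact hfrac
    have hmono : -(η * G ctilde) / (1 + G v) ≤ (G u - G v) / (1 + G v) :=
      (div_le_div_iff_of_pos_right hden).mpr hnum
    rw [ge_iff_le]
    calc -(η * (n : ℝ) * R / r) = -(η * ((n : ℝ) * R / r)) := by ring
      _ ≤ -(η * G ctilde / (1 + G v)) := neg_le_neg hstep
      _ = -(η * G ctilde) / (1 + G v) := (neg_div _ _).symm
      _ ≤ (G u - G v) / (1 + G v) := hmono
end
end
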